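/- arXiv:1810.10248 — 6 statements merged into one kernel-verified Lean document; each statement's English description precedes it below -/
import Mathlib

section
/- The measure ρ_N is invariant under R_N: for every Borel set A ⊆ [0,1], ρ_N(R_N^{−1}(A)) = ρ_N(A); that is, R_N is measure-preserving with respect to ρ_N. -/
open MeasureTheory Set Filter Topology

/-- The Rényi-type continued fraction transformation. -/
noncomputable def RN (N : ℕ) (x : ℝ) : ℝ :=
  if x = 1 then 0 else Int.fract ((N : ℝ) / (1 - x))

/-- The invariant measure ρ_N on the Borel subsets of [0,1]. -/
noncomputable def rhoN (N : ℕ) : MeasureTheory.Measure ℝ :=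
  (MeasureTheory.volume.restrict (Set.Icc (0:ℝ) 1)).withDensity
    (fun x => ENNReal.ofReal ((Real.log ((N : ℝ) / ((N : ℝ) - 1)))⁻¹ * (x + N - 1)⁻¹))


private lemma gk_hasDerivAt (n m y : ℝ) (h : m + y ≠ 0) :
    HasDerivAt (fun t : ℝ => 1 - n / (m + t)) (n / (m + y) ^ 2) y := by
  have h1 : HasDerivAt (fun t : ℝ => m + t) 1 y := (hasDerivAt_id y).const_add m
  have h3 := ((h1.inv h).const_mul n).const_sub 1
  simp only [div_eq_mul_inv]
  exact h3.congr_deriv (by ring)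

private lemma lintegral_image_aux {s : Set ℝ} {f f' : ℝ → ℝ}
    (hs : MeasurableSet s) (hf' : ∀ x ∈ s, HasDerivWithinAt f (f' x) s x)
    (hf : Set.InjOn f s) (g : ℝ → ENNReal) :
    ∫⁻ x in f '' s, g x = ∫⁻ x in s, ENNReal.ofReal |f' x| * g (f x) := by
  simpa only [ContinuousLinearMap.det_toSpanSingleton] using
    lintegral_image_eq_lintegral_abs_det_fderiv_mul volume hs
      (fun x hx => (hf' x hx).hasFDerivWithinAt) hf g
private lemma renyi_decomp (N : ℕ) (hN : 2 ≤ N) (A : Set ℝ) :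
    RN N ⁻¹' A ∩ Ico 0 1 =
      ⋃ k : ℕ, (fun y : ℝ => 1 - (N:ℝ) / (((N:ℝ) + k) + y)) '' (A ∩ Ico 0 1) := by
  have hn2 : (2:ℝ) ≤ (N:ℝ) := by exact_mod_cast hN
  have hN0 : (N:ℝ) ≠ 0 := by linarith
  ext x
  simp only [mem_inter_iff, mem_preimage, mem_iUnion, mem_image, mem_Ico]
  constructor
  · rintro ⟨hxA, hx0, hx1⟩
    have hx1' : x ≠ 1 := ne_of_lt hx1
    have h1x : 0 < 1 - x := by linarith
    set u := (N:ℝ) / (1 - x) with hu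
    have hun : (N:ℝ) ≤ u := by
      rw [hu, le_div_iff₀ h1x]; nlinarith
    have hu0 : 0 < u := by linarith
    have hfl : (N:ℤ) ≤ ⌊u⌋ := Int.le_floor.2 (by exact_mod_cast hun)
    refine ⟨(⌊u⌋ - N).toNat, Int.fract u, ⟨?_, Int.fract_nonneg u, Int.fract_lt_one u⟩, ?_⟩
    · have : RN N x = Int.fract u := by rw [RN, if_neg hx1']
      rwa [this] at hxA
    · have hk : ((N:ℝ) + (((⌊u⌋ - N).toNat : ℕ) : ℝ)) = (⌊u⌋ : ℝ) := by
        have h0 : (((⌊u⌋ - N).toNat : ℕ) : ℤ) = ⌊u⌋ - N := Int.toNat_of_nonneg (by omega)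
        have : (((⌊u⌋ - N).toNat : ℕ) : ℝ) = ((⌊u⌋ : ℝ) - N) := by
          exact_mod_cast congrArg (Int.cast : ℤ → ℝ) h0
        rw [this]; ring
      rw [hk]
      have hff : (⌊u⌋ : ℝ) + Int.fract u = u := by
        rw [Int.fract]; ring
      rw [hff, hu]
      field_simp
      ring
  · rintro ⟨k, y, ⟨hyA, hy0, hy1⟩, rfl⟩
    have hk0 : (0:ℝ) ≤ k := Nat.cast_nonneg k
    have hu0 : 0 < (N:ℝ) + k + y := by linarith
    have hnu : (N:ℝ) ≤ (N:ℝ) + k + y := by linarith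
    have hNpos : (0:ℝ) < N := by linarith
    have hxle : (N:ℝ)/(((N:ℝ)+k)+y) ≤ 1 := by
      rw [div_le_one (by linarith)]; linarith
    have hxpos : 0 < (N:ℝ)/(((N:ℝ)+k)+y) := div_pos hNpos (by linarith)
    refine ⟨?_, by linarith, by linarith⟩
    have hx1' : 1 - (N:ℝ)/(((N:ℝ)+k)+y) ≠ 1 := by
      intro h; nlinarith
    rw [RN, if_neg hx1']
    have h1x : 1 - (1 - (N:ℝ)/(((N:ℝ)+k)+y)) = (N:ℝ)/(((N:ℝ)+k)+y) := by ring
    rw [h1x]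
    have hinv : (N:ℝ) / ((N:ℝ)/(((N:ℝ)+k)+y)) = ((N:ℝ)+k)+y := by
      field_simp
    rw [hinv]
    have hrw : ((N:ℝ)+k)+y = y + ((N + k : ℕ) : ℝ) := by push_cast; ring
    rw [hrw, Int.fract_add_natCast, Int.fract_eq_self.2 ⟨hy0, hy1⟩]
    exact hyA

private lemma renyi_disj (N : ℕ) (hN : 2 ≤ N) (A : Set ℝ) :
    Pairwise (Function.onFun Disjoint fun k : ℕ =>
      (fun y : ℝ => 1 - (N:ℝ) / (((N:ℝ) + k) + y)) '' (A ∩ Ico 0 1)) := by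
  have hn2 : (2:ℝ) ≤ (N:ℝ) := by exact_mod_cast hN
  have hsub : ∀ k : ℕ, (fun y : ℝ => 1 - (N:ℝ)/(((N:ℝ)+k)+y)) '' (A ∩ Ico 0 1) ⊆
      Ico (1 - (N:ℝ)/((N:ℝ)+k)) (1 - (N:ℝ)/((N:ℝ)+k+1)) := by
    intro k x hx
    obtain ⟨y, ⟨-, hy0, hy1⟩, rfl⟩ := hx
    have hk0 : (0:ℝ) ≤ k := Nat.cast_nonneg k
    constructor
    · have : (N:ℝ)/(((N:ℝ)+k)+y) ≤ (N:ℝ)/((N:ℝ)+k) :=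
        div_le_div_of_nonneg_left (by linarith) (by linarith) (by linarith)
      linarith
    · have : (N:ℝ)/((N:ℝ)+k+1) < (N:ℝ)/(((N:ℝ)+k)+y) :=
        div_lt_div_of_pos_left (by linarith) (by linarith) (by linarith)
      linarith
  have key : ∀ k l : ℕ, k < l → Disjoint
      ((fun y : ℝ => 1 - (N:ℝ)/(((N:ℝ)+k)+y)) '' (A ∩ Ico 0 1))
      ((fun y : ℝ => 1 - (N:ℝ)/(((N:ℝ)+l)+y)) '' (A ∩ Ico 0 1)) := by
    intro k l hkl
    refine Set.disjoint_of_subset (hsub k) (hsub l) ?_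
    have hkl' : (k:ℝ) + 1 ≤ l := by exact_mod_cast hkl
    have hk0 : (0:ℝ) ≤ k := Nat.cast_nonneg k
    apply Set.Ico_disjoint_Ico.2
    have h1 : (1:ℝ) - (N:ℝ)/((N:ℝ)+k+1) ≤ 1 - (N:ℝ)/((N:ℝ)+l) := by
      have : (N:ℝ)/((N:ℝ)+l) ≤ (N:ℝ)/((N:ℝ)+k+1) :=
        div_le_div_of_nonneg_left (by linarith) (by linarith) (by linarith)
      linarith
    exact min_le_of_left_le (le_max_of_le_right h1)
  intro k l hkl
  rcases hkl.lt_or_gt with h | h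
  · exact key k l h
  · exact (key l k h).symm

private lemma renyi_tsum (N : ℕ) (hN : 2 ≤ N) {c y : ℝ} (hc : 0 ≤ c) (hy0 : 0 ≤ y)
    (hy1 : y < 1) :
    ∑' k : ℕ, ENNReal.ofReal |(N:ℝ)/(((N:ℝ)+k)+y)^2| *
        ENNReal.ofReal (c * ((1 - (N:ℝ)/(((N:ℝ)+k)+y)) + N - 1)⁻¹)
      = ENNReal.ofReal (c * (y + N - 1)⁻¹) := by
  have hn2 : (2:ℝ) ≤ (N:ℝ) := by exact_mod_cast hN
  set b : ℕ → ℝ := fun k => ((N:ℝ) + k + y - 1)⁻¹ with hb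
  have hbpos : ∀ k : ℕ, (0:ℝ) < (N:ℝ) + k + y - 1 := by
    intro k; have : (0:ℝ) ≤ k := Nat.cast_nonneg k; linarith
  have step1 : ∀ k : ℕ, ENNReal.ofReal |(N:ℝ)/(((N:ℝ)+k)+y)^2| *
      ENNReal.ofReal (c * ((1 - (N:ℝ)/(((N:ℝ)+k)+y)) + N - 1)⁻¹)
      = ENNReal.ofReal (c * (b k - b (k+1))) := by
    intro k
    rw [← ENNReal.ofReal_mul (abs_nonneg _)]
    congr 1
    have hk0 : (0:ℝ) ≤ k := Nat.cast_nonneg k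
    have hu : (0:ℝ) < (N:ℝ) + k + y := by linarith
    have hu1 : (0:ℝ) < (N:ℝ) + k + y - 1 := hbpos k
    have hN0 : (0:ℝ) < N := by linarith
    rw [abs_of_nonneg (by positivity)]
    have hbk : b k = ((N:ℝ) + k + y - 1)⁻¹ := rfl
    have hbk1 : b (k+1) = ((N:ℝ) + k + y)⁻¹ := by
      simp only [hb]; push_cast; ring_nf
    rw [hbk, hbk1]
    have hrw : (1 - (N:ℝ)/(((N:ℝ)+k)+y)) + N - 1 = (N:ℝ) * ((N:ℝ)+k+y-1) / ((N:ℝ)+k+y) := by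
      field_simp; ring
    rw [hrw]
    field_simp
    ring
  rw [tsum_congr step1]
  have hbanti : ∀ k : ℕ, b (k+1) ≤ b k := by
    intro k
    apply inv_anti₀ (hbpos k)
    push_cast; linarith
  have hnonneg : ∀ k : ℕ, 0 ≤ c * (b k - b (k+1)) :=
    fun k => mul_nonneg hc (sub_nonneg.2 (hbanti k))
  have htend : Tendsto b atTop (𝓝 0) := by
    apply Tendsto.comp tendsto_inv_atTop_zero
    have h1 : Tendsto (fun k : ℕ => ((N:ℝ) + k) + (y - 1)) atTop atTop :=
      tendsto_atTop_add_const_right _ _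
        (tendsto_atTop_add_const_left _ _ tendsto_natCast_atTop_atTop)
    have : (fun k : ℕ => ((N:ℝ) + k) + (y - 1)) = fun k : ℕ => (N:ℝ) + k + y - 1 := by
      funext k; ring
    rwa [this] at h1
  have hbsum : HasSum (fun k : ℕ => b k - b (k+1)) (b 0) := by
    rw [hasSum_iff_tendsto_nat_of_nonneg (fun k => sub_nonneg.2 (hbanti k))]
    have heq : ∀ n : ℕ, ∑ i ∈ Finset.range n, (b i - b (i+1)) = b 0 - b n :=
      fun n => Finset.sum_range_sub' b n
    simp only [heq]
    simpa using tendsto_const_nhds.sub htend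
  have hsum : HasSum (fun k : ℕ => c * (b k - b (k+1))) (c * b 0) := hbsum.mul_left c
  rw [← ENNReal.ofReal_tsum_of_nonneg hnonneg hsum.summable, hsum.tsum_eq]
  congr 1
  simp only [hb]
  push_cast
  ring_nf


theorem stmt2 (N : ℕ) (hN : 2 ≤ N) (A : Set ℝ)
    (hA : MeasurableSet A) (hA' : A ⊆ Set.Icc (0:ℝ) 1) :
    rhoN N (RN N ⁻¹' A) = rhoN N A := by
  have hn2 : (2:ℝ) ≤ (N:ℝ) := by exact_mod_cast hN
  have hc0 : 0 ≤ (Real.log ((N:ℝ)/((N:ℝ)-1)))⁻¹ := by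
    apply inv_nonneg.2
    apply Real.log_nonneg
    rw [le_div_iff₀ (by linarith)]; linarith
  -- measurability of RN
  have hRN : Measurable (RN N) := by
    unfold RN
    refine Measurable.ite (measurableSet_eq) measurable_const ?_
    exact (measurable_const.div (measurable_const.sub measurable_id)).fract
  have hpre : MeasurableSet (RN N ⁻¹' A) := hRN hA
  set A' : Set ℝ := A ∩ Ico 0 1 with hA''
  have hA'm : MeasurableSet A' := hA.inter measurableSet_Ico
  set g : ℕ → ℝ → ℝ := fun k y => 1 - (N:ℝ)/(((N:ℝ)+k)+y) with hg
  set g' : ℕ → ℝ → ℝ := fun k y => (N:ℝ)/(((N:ℝ)+k)+y)^2 with hg'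
  have hgne : ∀ (k : ℕ), ∀ y ∈ A', ((N:ℝ)+k)+y ≠ 0 := by
    intro k y hy
    have h1 : (0:ℝ) ≤ y := hy.2.1
    have h2 : (0:ℝ) ≤ k := Nat.cast_nonneg k
    positivity
  have hgd : ∀ (k : ℕ), ∀ y ∈ A', HasDerivWithinAt (g k) (g' k y) A' y := by
    intro k y hy
    exact (gk_hasDerivAt (N:ℝ) ((N:ℝ)+k) y (hgne k y hy)).hasDerivWithinAt
  have hginj : ∀ k : ℕ, InjOn (g k) A' := by
    intro k
    apply StrictMonoOn.injOn
    intro y1 hy1 y2 hy2 h12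
    have hk0 : (0:ℝ) ≤ k := Nat.cast_nonneg k
    have : (N:ℝ)/(((N:ℝ)+k)+y2) < (N:ℝ)/(((N:ℝ)+k)+y1) :=
      div_lt_div_of_pos_left (by linarith) (by
        have := hy1.2.1; linarith) (by linarith)
    simp only [hg]
    linarith
  have himage : ∀ k : ℕ, MeasurableSet (g k '' A') := by
    intro k
    exact measurable_image_of_fderivWithin hA'm
      (fun y hy => (hgd k y hy).hasFDerivWithinAt) (hginj k)
  -- unfold the measure
  simp only [rhoN]
  rw [withDensity_apply _ hpre, withDensity_apply _ hA,
    Measure.restrict_restrict hpre, Measure.restrict_restrict hA]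
  set D : ℝ → ENNReal :=
    fun x => ENNReal.ofReal ((Real.log ((N:ℝ)/((N:ℝ)-1)))⁻¹ * (x + N - 1)⁻¹) with hD
  have hDm : Measurable D := by
    apply Measurable.ennreal_ofReal
    exact (((measurable_id.add_const (N:ℝ)).sub_const 1).inv).const_mul _
  -- replace sets by a.e. equal ones
  have hAeq : A ∩ Icc 0 1 = A := inter_eq_left.2 hA'
  rw [hAeq]
  have hae1 : (RN N ⁻¹' A ∩ Icc 0 1 : Set ℝ) =ᵐ[volume] (⋃ k : ℕ, g k '' A') := by
    rw [← renyi_decomp N hN A]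
    rw [MeasureTheory.ae_eq_set]
    constructor
    · have hsub : (RN N ⁻¹' A ∩ Icc 0 1) \ (RN N ⁻¹' A ∩ Ico 0 1) ⊆ ({1} : Set ℝ) := by
        intro x hx
        obtain ⟨⟨hxA, hx0, hx1⟩, hnot⟩ := hx
        simp only [mem_inter_iff, mem_Ico, not_and, mem_singleton_iff] at *
        by_contra h
        exact hnot hxA hx0 (lt_of_le_of_ne hx1 h)
      exact measure_mono_null hsub Real.volume_singleton
    · rw [Set.diff_eq_empty.2 (inter_subset_inter_right _ Ico_subset_Icc_self)]
      exact measure_empty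
  have hae2 : A =ᵐ[volume] A' := by
    rw [MeasureTheory.ae_eq_set]
    constructor
    · have hsub : A \ A' ⊆ ({1} : Set ℝ) := by
        intro x hx
        obtain ⟨hxA, hnot⟩ := hx
        obtain ⟨hx0, hx1⟩ := hA' hxA
        simp only [hA'', mem_inter_iff, mem_Ico, not_and, mem_singleton_iff] at *
        by_contra h
        exact hnot hxA hx0 (lt_of_le_of_ne hx1 h)
      exact measure_mono_null hsub Real.volume_singleton
    · rw [Set.diff_eq_empty.2 (inter_subset_left)]
      exact measure_empty
  rw [setLIntegral_congr hae1, setLIntegral_congr hae2]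
  rw [lintegral_iUnion himage (renyi_disj N hN A)]
  have cov : ∀ k : ℕ, ∫⁻ x in g k '' A', D x
      = ∫⁻ y in A', ENNReal.ofReal |g' k y| * D (g k y) := by
    intro k
    exact lintegral_image_aux hA'm (hgd k) (hginj k) D
  rw [tsum_congr cov]
  have hFm : ∀ k : ℕ, Measurable (fun y : ℝ => ENNReal.ofReal |g' k y| * D (g k y)) := by
    intro k
    refine Measurable.mul (f := fun y => ENNReal.ofReal |g' k y|) (g := fun y => D (g k y)) ?_ ?_
    · apply Measurable.ennreal_ofReal
      apply Measurable.abs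
      exact measurable_const.div ((measurable_const.add measurable_id).pow_const 2)
    · apply hDm.comp
      exact measurable_const.sub (measurable_const.div (measurable_const.add measurable_id))
  rw [← lintegral_tsum (fun k => (hFm k).aemeasurable)]
  apply setLIntegral_congr_fun hA'm
  intro y hy
  have := renyi_tsum N hN hc0 hy.2.1 hy.2.2
  simp only [hg, hg', hD]
  exact this
end

section
/- For every f ∈ L¹([0,1], ρ_N) and every Borel set A ⊆ [0,1], one has ∫_{R_N^{−1}(A)} f dρ_N = ∫_A (Σ_{i=N}^∞ P_{N,i}(x) f(u_{N,i}(x))) dρ_N(x); i.e., the Perron–Frobenius operator of R_N under ρ_N is given by Uf(x) = Σ_{i≥N} P_{N,i}(x) f(u_{N,i}(x)). -/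
open MeasureTheory Set Filter Topology

/-- The kernel P_{N,i}(x) = (x+N-1)/((x+i)(x+i-1)). -/
noncomputable def PNi (N i : ℕ) (x : ℝ) : ℝ :=
  (x + N - 1) / ((x + i) * (x + i - 1))

/-- The inverse branches u_{N,i}(x) = 1 - N/(x+i). -/
noncomputable def uNi (N i : ℕ) (x : ℝ) : ℝ := 1 - (N : ℝ) / (x + i)

/-- The Perron–Frobenius operator U of R_N under ρ_N:
`U f(x) = Σ_{i ≥ N} P_{N,i}(x) f(u_{N,i}(x))`, indexed by i = N + k. -/
noncomputable def U (N : ℕ) (f : ℝ → ℝ) (x : ℝ) : ℝ :=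
  ∑' k : ℕ, PNi N (N + k) x * f (uNi N (N + k) x)

namespace Stmt4Aux

open scoped ENNReal NNReal

/-- 1D version of the lintegral change of variables. -/
theorem lintegral_image_eq_lintegral_abs_deriv_mul {s : Set ℝ} {f : ℝ → ℝ} {f' : ℝ → ℝ}
    (hs : MeasurableSet s) (hf' : ∀ x ∈ s, HasDerivWithinAt f (f' x) s x)
    (hf : InjOn f s) (g : ℝ → ENNReal) :
    ∫⁻ x in f '' s, g x = ∫⁻ x in s, ENNReal.ofReal |f' x| * g (f x) := by
  simpa only [ContinuousLinearMap.det_toSpanSingleton] using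
    lintegral_image_eq_lintegral_abs_det_fderiv_mul volume hs
      (fun x hx => (hf' x hx).hasFDerivWithinAt) hf g

/-- The density of `rhoN` as a real function. -/
noncomputable def D (N : ℕ) (x : ℝ) : ℝ :=
  (Real.log ((N : ℝ) / ((N : ℝ) - 1)))⁻¹ * (x + N - 1)⁻¹

variable {N : ℕ}

lemma hN1 (hN : 2 ≤ N) : (1:ℝ) ≤ (N:ℝ) - 1 := by
  have : (2:ℝ) ≤ (N:ℝ) := by exact_mod_cast hN
  linarith

lemma log_pos' (hN : 2 ≤ N) : 0 < Real.log ((N : ℝ) / ((N : ℝ) - 1)) := by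
  have h := hN1 hN
  apply Real.log_pos
  rw [lt_div_iff₀ (by linarith)]
  linarith

lemma D_pos (hN : 2 ≤ N) {x : ℝ} (hx : 0 ≤ x) : 0 < D N x := by
  have h := hN1 hN
  exact mul_pos (inv_pos.2 (log_pos' hN)) (inv_pos.2 (by linarith))

lemma D_meas : Measurable (D N) :=
  measurable_const.mul (((measurable_id.add_const _).sub_const _).inv)

lemma rhoN_eq : rhoN N =
    (volume.restrict (Icc (0:ℝ) 1)).withDensity
      (fun x => ((D N x).toNNReal : ℝ≥0∞)) := rfl

lemma RN_meas : Measurable (RN N) := by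
  unfold RN
  refine Measurable.ite (measurableSet_eq) measurable_const ?_
  exact measurable_fract.comp (measurable_const.div (measurable_const.sub measurable_id))

lemma setIntegral_rhoN (hN : 2 ≤ N) {S : Set ℝ} (hS : MeasurableSet S) (g : ℝ → ℝ) :
    ∫ x in S, g x ∂(rhoN N) = ∫ x in S ∩ Icc (0:ℝ) 1, D N x * g x := by
  rw [rhoN_eq]
  show ∫ x, g x ∂(((volume.restrict (Icc (0:ℝ) 1)).withDensity _).restrict S) = _
  rw [restrict_withDensity hS, Measure.restrict_restrict hS,
    integral_withDensity_eq_integral_smul (D_meas.real_toNNReal) g]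
  refine setIntegral_congr_fun (hS.inter measurableSet_Icc) (fun x hx => ?_)
  have hx0 : (0:ℝ) ≤ x := hx.2.1
  rw [NNReal.smul_def, Real.coe_toNNReal _ (D_pos hN hx0).le, smul_eq_mul]

lemma integrableOn_D_mul (hN : 2 ≤ N) {f : ℝ → ℝ} (hf : Integrable f (rhoN N)) :
    IntegrableOn (fun x => D N x * f x) (Icc (0:ℝ) 1) volume := by
  rw [rhoN_eq] at hf
  rw [integrable_withDensity_iff_integrable_smul (D_meas.real_toNNReal)] at hf
  refine hf.congr ?_
  filter_upwards [ae_restrict_mem measurableSet_Icc] with x hx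
  rw [NNReal.smul_def, Real.coe_toNNReal _ (D_pos hN hx.1).le, smul_eq_mul]

/-- Left endpoint of the branch interval. -/
noncomputable def ak (N k : ℕ) : ℝ := 1 - (N:ℝ) / ((N:ℝ) + k)

/-- Right endpoint of the branch interval. -/
noncomputable def bk (N k : ℕ) : ℝ := 1 - (N:ℝ) / ((N:ℝ) + k + 1)

lemma ck_pos (hN : 2 ≤ N) (k : ℕ) : (0:ℝ) < (N:ℝ) + k := by
  have : (2:ℝ) ≤ (N:ℝ) := by exact_mod_cast hN
  positivity

lemma Npos (hN : 2 ≤ N) : (0:ℝ) < (N:ℝ) := by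
  have : (2:ℝ) ≤ (N:ℝ) := by exact_mod_cast hN
  linarith

lemma uNi_def (k : ℕ) (x : ℝ) : uNi N (N + k) x = 1 - (N:ℝ) / (x + ((N:ℝ) + k)) := by
  unfold uNi; push_cast; ring_nf

lemma ak_lt_bk (hN : 2 ≤ N) (k : ℕ) : ak N k < bk N k := by
  have h1 := ck_pos hN k
  have h2 := Npos hN
  unfold ak bk
  have : (N:ℝ) / ((N:ℝ) + k + 1) < (N:ℝ) / ((N:ℝ) + k) := by
    apply div_lt_div_of_pos_left h2 h1; linarith
  linarith

lemma ak_nonneg (hN : 2 ≤ N) (k : ℕ) : 0 ≤ ak N k := by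
  have h1 := ck_pos hN k
  have h2 := Npos hN
  unfold ak
  have : (N:ℝ) / ((N:ℝ) + k) ≤ 1 := by
    rw [div_le_one h1]; have : (0:ℝ) ≤ k := Nat.cast_nonneg k; linarith
  linarith

lemma bk_lt_one (hN : 2 ≤ N) (k : ℕ) : bk N k < 1 := by
  have h1 := ck_pos hN k
  have h2 := Npos hN
  unfold bk
  have : 0 < (N:ℝ) / ((N:ℝ) + k + 1) := by positivity
  linarith

lemma branch_subset (hN : 2 ≤ N) (k : ℕ) : Ico (ak N k) (bk N k) ⊆ Ico (0:ℝ) 1 :=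
  Ico_subset_Ico (ak_nonneg hN k) (bk_lt_one hN k).le

lemma ak_mono (hN : 2 ≤ N) {j k : ℕ} (h : j ≤ k) : ak N j ≤ ak N k := by
  have h1 := ck_pos hN j
  have h2 := ck_pos hN k
  have h3 := Npos hN
  unfold ak
  have : (N:ℝ) / ((N:ℝ) + k) ≤ (N:ℝ) / ((N:ℝ) + j) := by
    apply div_le_div_of_nonneg_left h3.le h1
    have : (j:ℝ) ≤ k := by exact_mod_cast h
    linarith
  linarith

lemma bk_eq_ak_succ (k : ℕ) : bk N k = ak N (k + 1) := by
  unfold ak bk; push_cast; ring_nf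

lemma branch_disjoint (hN : 2 ≤ N) :
    Pairwise (Function.onFun Disjoint fun k => Ico (ak N k) (bk N k)) := by
  have key : ∀ j k : ℕ, j < k → Disjoint (Ico (ak N j) (bk N j)) (Ico (ak N k) (bk N k)) := by
    intro j k hjk
    rw [Set.Ico_disjoint_Ico]
    have : bk N j ≤ ak N k := by
      rw [bk_eq_ak_succ]; exact ak_mono hN hjk
    exact le_trans (min_le_left _ _) (le_trans this (le_max_right _ _))
  intro j k hjk
  rcases lt_or_gt_of_ne hjk with h | h
  · exact key j k h
  · exact (key k j h).symm

lemma mem_branch (hN : 2 ≤ N) (k : ℕ) {y : ℝ} (hy : y ∈ Ico (0:ℝ) 1) :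
    uNi N (N + k) y ∈ Ico (ak N k) (bk N k) := by
  have h1 := ck_pos hN k
  have h2 := Npos hN
  rw [uNi_def]
  constructor
  · unfold ak
    have : (N:ℝ) / (y + ((N:ℝ) + k)) ≤ (N:ℝ) / ((N:ℝ) + k) := by
      apply div_le_div_of_nonneg_left h2.le h1; linarith [hy.1]
    linarith
  · unfold bk
    have : (N:ℝ) / ((N:ℝ) + k + 1) < (N:ℝ) / (y + ((N:ℝ) + k)) := by
      apply div_lt_div_of_pos_left h2 (by linarith [hy.1]); linarith [hy.2]
    linarith

lemma mem_branch_Icc (hN : 2 ≤ N) (k : ℕ) {y : ℝ} (hy : y ∈ Icc (0:ℝ) 1) :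
    uNi N (N + k) y ∈ Icc (ak N k) (bk N k) := by
  have h1 := ck_pos hN k
  have h2 := Npos hN
  rw [uNi_def]
  constructor
  · unfold ak
    have : (N:ℝ) / (y + ((N:ℝ) + k)) ≤ (N:ℝ) / ((N:ℝ) + k) := by
      apply div_le_div_of_nonneg_left h2.le h1; linarith [hy.1]
    linarith
  · unfold bk
    have : (N:ℝ) / ((N:ℝ) + k + 1) ≤ (N:ℝ) / (y + ((N:ℝ) + k)) := by
      apply div_le_div_of_nonneg_left h2.le (by linarith [hy.1]); linarith [hy.2]
    linarith

lemma RN_uNi (hN : 2 ≤ N) (k : ℕ) {y : ℝ} (hy : y ∈ Ico (0:ℝ) 1) :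
    RN N (uNi N (N + k) y) = y := by
  have h1 := ck_pos hN k
  have h2 := Npos hN
  have hden : (0:ℝ) < y + ((N:ℝ) + k) := by linarith [hy.1]
  have hfrac : (0:ℝ) < (N:ℝ) / (y + ((N:ℝ) + k)) := by positivity
  have hne : uNi N (N + k) y ≠ 1 := by rw [uNi_def]; linarith
  simp only [RN]; rw [if_neg hne]
  have h3 : 1 - uNi N (N + k) y = (N:ℝ) / (y + ((N:ℝ) + k)) := by rw [uNi_def]; ring
  have h4 : (N:ℝ) / (1 - uNi N (N + k) y) = y + ((N:ℝ) + k) := by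
    rw [h3]; field_simp
  rw [h4]
  have : y + ((N:ℝ) + k) = y + ((N + k : ℕ) : ℝ) := by push_cast; ring
  rw [this, Int.fract_add_natCast, Int.fract_eq_self.2 ⟨hy.1, hy.2⟩]

lemma RN_mem_of_branch (hN : 2 ≤ N) (k : ℕ) {x : ℝ}
    (hx : x ∈ Ico (ak N k) (bk N k)) :
    RN N x ∈ Ico (0:ℝ) 1 ∧ uNi N (N + k) (RN N x) = x := by
  have h1 := ck_pos hN k
  have h2 := Npos hN
  have hx1 : x < 1 := lt_of_lt_of_le hx.2 (bk_lt_one hN k).le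
  have hxs : 0 < 1 - x := by linarith
  set t := (N:ℝ) / (1 - x) with ht
  have hta : (N:ℝ) + k ≤ t := by
    rw [ht, le_div_iff₀ hxs]
    have := hx.1
    unfold ak at this
    -- x ≥ 1 - N/(N+k)  ⟹  1 - x ≤ N/(N+k)  ⟹  (N+k)(1-x) ≤ N
    have h3 : 1 - x ≤ (N:ℝ) / ((N:ℝ) + k) := by linarith
    calc ((N:ℝ) + k) * (1 - x) ≤ ((N:ℝ) + k) * ((N:ℝ) / ((N:ℝ) + k)) := by
          apply mul_le_mul_of_nonneg_left h3 h1.le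
      _ = (N:ℝ) := by field_simp
  have htb : t < (N:ℝ) + k + 1 := by
    rw [ht, div_lt_iff₀ hxs]
    have := hx.2
    unfold bk at this
    have h3 : (N:ℝ) / ((N:ℝ) + k + 1) < 1 - x := by linarith
    calc (N:ℝ) = ((N:ℝ) + k + 1) * ((N:ℝ) / ((N:ℝ) + k + 1)) := by field_simp
      _ < ((N:ℝ) + k + 1) * (1 - x) := by
          apply mul_lt_mul_of_pos_left h3 (by linarith)
  have ht0 : 0 < t := lt_of_lt_of_le (by linarith) hta
  have hfloor : ⌊t⌋ = ((N + k : ℕ) : ℤ) := by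
    rw [Int.floor_eq_iff]
    constructor
    · push_cast; exact hta
    · push_cast; linarith
  have hfract : Int.fract t = t - ((N:ℝ) + k) := by
    rw [← Int.self_sub_floor, hfloor]; push_cast; ring
  have hRN : RN N x = t - ((N:ℝ) + k) := by
    simp only [RN]; rw [if_neg (by intro h; rw [h] at hx1; exact absurd hx1 (lt_irrefl _)), ← ht, hfract]
  constructor
  · rw [hRN]; exact ⟨by linarith, by linarith⟩
  · rw [hRN, uNi_def]
    have htne : t ≠ 0 := ht0.ne'
    have : t - ((N:ℝ) + k) + ((N:ℝ) + k) = t := by ring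
    rw [this, ht]
    field_simp
    ring

lemma inj_uNi (hN : 2 ≤ N) (k : ℕ) : InjOn (uNi N (N + k)) (Icc (0:ℝ) 1) := by
  intro a ha b hb h
  have h1 := ck_pos hN k
  have h2 := Npos hN
  rw [uNi_def, uNi_def] at h
  have ha' : (0:ℝ) < a + ((N:ℝ) + k) := by linarith [ha.1]
  have hb' : (0:ℝ) < b + ((N:ℝ) + k) := by linarith [hb.1]
  have : (N:ℝ) / (a + ((N:ℝ) + k)) = (N:ℝ) / (b + ((N:ℝ) + k)) := by linarith
  rw [div_eq_div_iff ha'.ne' hb'.ne'] at this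
  have := mul_left_cancel₀ h2.ne' this
  linarith

lemma image_uNi (hN : 2 ≤ N) (k : ℕ) {s : Set ℝ} (hs : s ⊆ Ico (0:ℝ) 1) :
    uNi N (N + k) '' s = RN N ⁻¹' s ∩ Ico (ak N k) (bk N k) := by
  ext x
  constructor
  · rintro ⟨y, hy, rfl⟩
    exact ⟨by rw [mem_preimage, RN_uNi hN k (hs hy)]; exact hy, mem_branch hN k (hs hy)⟩
  · rintro ⟨hx1, hx2⟩
    obtain ⟨hmem, heq⟩ := RN_mem_of_branch hN k hx2
    exact ⟨RN N x, hx1, heq⟩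

lemma hasDeriv_uNi (hN : 2 ≤ N) (k : ℕ) {y : ℝ} (hy : 0 ≤ y) :
    HasDerivAt (uNi N (N + k)) ((N:ℝ) / (y + ((N:ℝ) + k)) ^ 2) y := by
  have h1 := ck_pos hN k
  have hden : y + ((N:ℝ) + k) ≠ 0 := by positivity
  have hdiv : HasDerivAt (fun x : ℝ => (N:ℝ) / (x + ((N:ℝ) + k)))
      ((0 * (y + ((N:ℝ) + k)) - (N:ℝ) * 1) / (y + ((N:ℝ) + k)) ^ 2) y :=
    (hasDerivAt_const y ((N:ℝ))).div ((hasDerivAt_id y).add_const _) hden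
  have h3 : HasDerivAt (fun x : ℝ => 1 - (N:ℝ) / (x + ((N:ℝ) + k)))
      ((N:ℝ) / (y + ((N:ℝ) + k)) ^ 2) y := by
    have := hdiv.const_sub 1
    exact this.congr_deriv (by ring)
  have : uNi N (N + k) = fun x : ℝ => 1 - (N:ℝ) / (x + ((N:ℝ) + k)) := by
    funext x; exact uNi_def k x
  rw [this]
  exact h3

lemma iUnion_branches (hN : 2 ≤ N) : (⋃ k, Ico (ak N k) (bk N k)) = Ico (0:ℝ) 1 := by
  apply Subset.antisymm
  · exact iUnion_subset fun k => branch_subset hN k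
  · intro x hx
    have h2 := Npos hN
    have hxs : 0 < 1 - x := by linarith [hx.2]
    set t := (N:ℝ) / (1 - x) with ht
    have htN : (N:ℝ) ≤ t := by
      rw [ht, le_div_iff₀ hxs]
      nlinarith [hx.1, hx.2]
    have ht0 : 0 < t := lt_of_lt_of_le h2 htN
    have hfl : (N:ℤ) ≤ ⌊t⌋ := by
      rw [Int.le_floor]; push_cast; exact htN
    set k : ℕ := (⌊t⌋ - N).toNat with hk
    have hNk : ((N:ℝ) + k) = (⌊t⌋ : ℝ) := by
      have h' : (N:ℤ) + ((⌊t⌋ - (N:ℤ)).toNat : ℤ) = ⌊t⌋ := by omega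
      rw [hk]
      exact_mod_cast h'
    refine mem_iUnion.2 ⟨k, ?_, ?_⟩
    · unfold ak
      have h3 : (N:ℝ) + k ≤ t := by rw [hNk]; exact Int.floor_le t
      have h4 : 0 < (N:ℝ) + k := by positivity
      have h5 : 1 - x ≤ (N:ℝ) / ((N:ℝ) + k) := by
        rw [le_div_iff₀ h4]
        calc (1 - x) * ((N:ℝ) + k) ≤ (1 - x) * t := by
              apply mul_le_mul_of_nonneg_left h3 hxs.le
          _ = (N:ℝ) := by rw [ht]; field_simp
      linarith
    · unfold bk
      have h3 : t < (N:ℝ) + k + 1 := by rw [hNk]; exact_mod_cast Int.lt_floor_add_one t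
      have h4 : 0 < (N:ℝ) + k + 1 := by positivity
      have h5 : (N:ℝ) / ((N:ℝ) + k + 1) < 1 - x := by
        rw [div_lt_iff₀ h4]
        calc (N:ℝ) = (1 - x) * t := by rw [ht]; field_simp
          _ < (1 - x) * ((N:ℝ) + k + 1) := by
              apply mul_lt_mul_of_pos_left h3 hxs
      linarith

lemma key_alg (hN : 2 ≤ N) (k : ℕ) {y : ℝ} (hy : y ∈ Icc (0:ℝ) 1) (r : ℝ) :
    |(N:ℝ) / (y + ((N:ℝ) + k)) ^ 2| * (D N (uNi N (N + k) y) * r) =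
      D N y * (PNi N (N + k) y * r) := by
  have h1 := ck_pos hN k
  have h2 := Npos hN
  have hL := log_pos' hN
  have hNR := hN1 hN
  have hden : (0:ℝ) < y + ((N:ℝ) + k) := by linarith [hy.1]
  have hden1 : (0:ℝ) < y + ((N:ℝ) + k) - 1 := by
    have : (2:ℝ) ≤ (N:ℝ) := by exact_mod_cast hN
    have hk0 : (0:ℝ) ≤ k := Nat.cast_nonneg k
    linarith [hy.1]
  have habs : |(N:ℝ) / (y + ((N:ℝ) + k)) ^ 2| = (N:ℝ) / (y + ((N:ℝ) + k)) ^ 2 := by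
    apply abs_of_pos; positivity
  have hu : uNi N (N + k) y + (N:ℝ) - 1 = (N:ℝ) * (y + ((N:ℝ) + k) - 1) / (y + ((N:ℝ) + k)) := by
    rw [uNi_def]; field_simp; ring
  have hyN : (0:ℝ) < y + (N:ℝ) - 1 := by linarith [hy.1]
  rw [habs]
  unfold D PNi
  rw [hu]
  have hcast : ((N + k : ℕ) : ℝ) = (N:ℝ) + k := by push_cast; ring
  rw [hcast]
  field_simp

lemma uNi_mem_Icc (hN : 2 ≤ N) (k : ℕ) {y : ℝ} (hy : y ∈ Icc (0:ℝ) 1) :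
    uNi N (N + k) y ∈ Icc (0:ℝ) 1 := by
  have h := mem_branch_Icc hN k hy
  exact ⟨le_trans (ak_nonneg hN k) h.1, le_trans h.2 (bk_lt_one hN k).le⟩

/-- Lebesgue-null sets in `[0,1]` are `rhoN`-null preimage-compatible: the set where
`f` differs from its measurable representative has Lebesgue measure zero inside `[0,1]`. -/
lemma vol_null_of_rhoN_null (hN : 2 ≤ N) {T : Set ℝ} (hT : MeasurableSet T)
    (h : rhoN N T = 0) : volume (T ∩ Icc (0:ℝ) 1) = 0 := by
  rw [rhoN_eq, withDensity_apply _ hT, Measure.restrict_restrict hT] at h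
  have hmeas : MeasurableSet (T ∩ Icc (0:ℝ) 1) := hT.inter measurableSet_Icc
  have h1 : (fun x => ((D N x).toNNReal : ℝ≥0∞)) =ᵐ[volume.restrict (T ∩ Icc (0:ℝ) 1)]
      (0 : ℝ → ℝ≥0∞) := by
    rw [← lintegral_eq_zero_iff (D_meas.real_toNNReal.coe_nnreal_ennreal)]
    exact h
  have h2 : ∀ᵐ x ∂(volume.restrict (T ∩ Icc (0:ℝ) 1)), False := by
    filter_upwards [h1, ae_restrict_mem hmeas] with x hx hxm
    have : (0:ℝ) < D N x := D_pos hN hxm.2.1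
    simp only [Pi.zero_apply] at hx
    rw [ENNReal.coe_eq_zero, Real.toNNReal_eq_zero] at hx
    linarith
  have : volume.restrict (T ∩ Icc (0:ℝ) 1) = 0 := by
    rwa [← MeasureTheory.ae_eq_bot, ← Filter.eventually_false_iff_eq_bot]
  rwa [Measure.restrict_eq_zero] at this

/-- The inverse branch `v_k` maps null subsets of the branch interval to null sets. -/
lemma preimage_null (hN : 2 ≤ N) (k : ℕ) {T : Set ℝ} (hT : MeasurableSet T)
    (hT0 : volume (T ∩ Icc (0:ℝ) 1) = 0) :
    volume {y ∈ Icc (0:ℝ) 1 | uNi N (N + k) y ∈ T} = 0 := by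
  set v : ℝ → ℝ := fun y => (N:ℝ) / (1 - y) - ((N:ℝ) + k) with hv
  set s : Set ℝ := T ∩ Icc (ak N k) (bk N k) with hs
  have h2 := Npos hN
  have h1 := ck_pos hN k
  have hsub : Icc (ak N k) (bk N k) ⊆ Icc (0:ℝ) 1 :=
    Icc_subset_Icc (ak_nonneg hN k) (bk_lt_one hN k).le
  have hsm : MeasurableSet s := hT.inter measurableSet_Icc
  have hs0 : volume s = 0 := by
    apply measure_mono_null _ hT0
    exact inter_subset_inter_right T hsub
  -- each y ∈ s satisfies y < 1
  have hlt : ∀ y ∈ s, y < 1 := fun y hy =>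
    lt_of_le_of_lt hy.2.2 (bk_lt_one hN k)
  -- v is differentiable on s
  have hderiv : ∀ y ∈ s, HasDerivWithinAt v ((N:ℝ) / (1 - y) ^ 2) s y := by
    intro y hy
    have hne : 1 - y ≠ 0 := by have := hlt y hy; intro h; linarith [this]
    have h : HasDerivAt (fun x : ℝ => 1 - x) (-1) y := by
      simpa using (hasDerivAt_id y).const_sub 1
    have hdiv : HasDerivAt (fun x : ℝ => (N:ℝ) / (1 - x))
        ((0 * (1 - y) - (N:ℝ) * (-1)) / (1 - y) ^ 2) y :=
      (hasDerivAt_const y ((N:ℝ))).div h hne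
    have h3 : HasDerivAt v ((N:ℝ) / (1 - y) ^ 2) y := by
      have := hdiv.sub_const ((N:ℝ) + k)
      exact this.congr_deriv (by ring)
    exact h3.hasDerivWithinAt
  -- v is injective on s
  have hinj : InjOn v s := by
    intro a ha b hb h
    have ha' : (0:ℝ) < 1 - a := by have := hlt a ha; linarith
    have hb' : (0:ℝ) < 1 - b := by have := hlt b hb; linarith
    rw [hv] at h
    simp only [sub_left_inj] at h
    rw [div_eq_div_iff ha'.ne' hb'.ne'] at h
    have := mul_left_cancel₀ h2.ne' h
    linarith
  -- the target set is contained in v '' s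
  have hsubset : {y ∈ Icc (0:ℝ) 1 | uNi N (N + k) y ∈ T} ⊆ v '' s := by
    rintro y ⟨hy, hyT⟩
    refine ⟨uNi N (N + k) y, ⟨hyT, mem_branch_Icc hN k hy⟩, ?_⟩
    have hden : (0:ℝ) < y + ((N:ℝ) + k) := by linarith [hy.1]
    rw [hv]
    have h3 : 1 - uNi N (N + k) y = (N:ℝ) / (y + ((N:ℝ) + k)) := by rw [uNi_def]; ring
    simp only [h3]
    rw [div_div_eq_mul_div, mul_comm, mul_div_assoc, div_self h2.ne', mul_one]
    ring
  apply measure_mono_null hsubset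
  have : volume (v '' s) = ∫⁻ x in v '' s, 1 := (setLIntegral_one _).symm
  rw [this, lintegral_image_eq_lintegral_abs_deriv_mul hsm hderiv hinj]
  rw [Measure.restrict_eq_zero.2 hs0]
  simp

lemma aesm_comp (hN : 2 ≤ N) {f : ℝ → ℝ} (hf : Integrable f (rhoN N)) (k : ℕ)
    {A : Set ℝ} (hA : MeasurableSet A) (hA' : A ⊆ Icc (0:ℝ) 1) :
    AEStronglyMeasurable (fun y => f (uNi N (N + k) y)) (volume.restrict A) := by
  obtain ⟨f₀, hf₀m, hf₀e⟩ := hf.aestronglyMeasurable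
  set T : Set ℝ := toMeasurable (rhoN N) {x | f x ≠ f₀ x} with hT
  have hTm : MeasurableSet T := measurableSet_toMeasurable _ _
  have hT0 : rhoN N T = 0 := by
    rw [hT, measure_toMeasurable]
    exact hf₀e
  have hvol : volume (T ∩ Icc (0:ℝ) 1) = 0 := vol_null_of_rhoN_null hN hTm hT0
  have hnull := preimage_null hN k hTm hvol
  have humeas : Measurable (uNi N (N + k)) := by
    unfold uNi
    exact measurable_const.sub (measurable_const.div (measurable_id.add_const _))
  refine ⟨fun y => f₀ (uNi N (N + k) y), hf₀m.comp_measurable humeas, ?_⟩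
  have hsub : {y | y ∈ A ∧ f (uNi N (N + k) y) ≠ f₀ (uNi N (N + k) y)} ⊆
      {y ∈ Icc (0:ℝ) 1 | uNi N (N + k) y ∈ T} := by
    rintro y ⟨hyA, hyne⟩
    exact ⟨hA' hyA, subset_toMeasurable _ _ hyne⟩
  rw [Filter.EventuallyEq, ae_restrict_iff' hA]
  rw [ae_iff]
  apply measure_mono_null _ hnull
  intro y hy
  simp only [mem_setOf_eq] at hy
  push_neg at hy
  obtain ⟨hyA, hyne⟩ := hy
  exact hsub ⟨hyA, hyne⟩

lemma PNi_meas (N i : ℕ) : Measurable (PNi N i) := by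
  unfold PNi
  apply Measurable.div
  · exact (measurable_id.add_const _).sub_const _
  · exact ((measurable_id.add_const _)).mul ((measurable_id.add_const _).sub_const _)

end Stmt4Aux

open Stmt4Aux in
open scoped ENNReal NNReal in
theorem stmt4 (N : ℕ) (hN : 2 ≤ N) (f : ℝ → ℝ)
    (hf : MeasureTheory.Integrable f (rhoN N))
    (A : Set ℝ) (hA : MeasurableSet A) (hA' : A ⊆ Set.Icc (0:ℝ) 1) :
    ∫ x in RN N ⁻¹' A, f x ∂(rhoN N) = ∫ x in A, U N f x ∂(rhoN N) := by
  classical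
  have hRm : Measurable (RN N) := RN_meas
  have hpre : MeasurableSet (RN N ⁻¹' A) := hRm hA
  have hA1m : MeasurableSet (A \ {1}) := hA.diff (measurableSet_singleton 1)
  have hAsub : A \ {1} ⊆ Ico (0:ℝ) 1 := fun x hx =>
    ⟨(hA' hx.1).1, lt_of_le_of_ne (hA' hx.1).2 hx.2⟩
  have hA1ae : (A \ {1} : Set ℝ) =ᵐ[volume] A := by
    rw [MeasureTheory.diff_ae_eq_self]
    exact measure_mono_null inter_subset_right (measure_singleton 1)
  set F : ℝ → ℝ := fun x => D N x * f x with hF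
  have hFint : IntegrableOn F (Icc (0:ℝ) 1) volume := integrableOn_D_mul hN hf
  set g : ℕ → ℝ → ℝ := fun k y => D N y * (PNi N (N + k) y * f (uNi N (N + k) y)) with hg
  set E : ℕ → Set ℝ := fun k => RN N ⁻¹' (A \ {1}) ∩ Ico (ak N k) (bk N k) with hE
  have hEmeas : ∀ k, MeasurableSet (E k) := fun k => (hRm hA1m).inter measurableSet_Ico
  have hEdisj : Pairwise (Function.onFun Disjoint E) := by
    intro j k hjk
    exact ((branch_disjoint hN) hjk).mono inter_subset_right inter_subset_right
  have hEsub : ∀ k, E k ⊆ Icc (0:ℝ) 1 := fun k =>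
    (inter_subset_right).trans ((branch_subset hN k).trans Ico_subset_Icc_self)
  have himage : ∀ k, uNi N (N + k) '' (A \ {1}) = E k := fun k => image_uNi hN k hAsub
  -- change of variables on each branch
  have hbranch : ∀ k, ∫ x in E k, F x = ∫ y in A \ {1}, g k y := by
    intro k
    rw [← himage k]
    rw [integral_image_eq_integral_abs_deriv_smul hA1m
      (fun y hy => (hasDeriv_uNi hN k (hAsub hy).1).hasDerivWithinAt)
      ((inj_uNi hN k).mono (hAsub.trans Ico_subset_Icc_self)) F]
    refine setIntegral_congr_fun hA1m (fun y hy => ?_)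
    have hyI : y ∈ Icc (0:ℝ) 1 := Ico_subset_Icc_self (hAsub hy)
    rw [smul_eq_mul, hF]
    exact key_alg hN k hyI (f (uNi N (N + k) y))
  -- union decomposition of the preimage
  have hpre_eq : RN N ⁻¹' (A \ {1}) ∩ Ico (0:ℝ) 1 = RN N ⁻¹' A ∩ Ico (0:ℝ) 1 := by
    ext x
    simp only [mem_inter_iff, mem_preimage, mem_diff, mem_singleton_iff, and_congr_left_iff]
    intro hx
    constructor
    · exact fun h => h.1
    · intro h
      refine ⟨h, ?_⟩
      have hx1 : x ≠ 1 := by intro he; rw [he] at hx; exact absurd hx.2 (lt_irrefl _)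
      simp only [RN]; rw [if_neg hx1]
      exact ne_of_lt (Int.fract_lt_one _)
  have hunion : (⋃ k, E k) = RN N ⁻¹' A ∩ Ico (0:ℝ) 1 := by
    rw [hE, ← hpre_eq, ← inter_iUnion, iUnion_branches hN]
  -- LHS computation
  have hIccIco : (RN N ⁻¹' A ∩ Icc (0:ℝ) 1 : Set ℝ) =ᵐ[volume]
      (RN N ⁻¹' A ∩ Ico (0:ℝ) 1 : Set ℝ) := by
    exact MeasureTheory.ae_eq_set_inter (ae_eq_refl _) (Ico_ae_eq_Icc).symm
  have hLHS : ∫ x in RN N ⁻¹' A, f x ∂(rhoN N) = ∑' k, ∫ y in A \ {1}, g k y := by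
    rw [setIntegral_rhoN hN hpre f, setIntegral_congr_set hIccIco, ← hunion]
    rw [integral_iUnion hEmeas hEdisj (hFint.mono_set (iUnion_subset hEsub))]
    exact tsum_congr hbranch
  -- RHS computation
  have hAeq : A ∩ Icc (0:ℝ) 1 = A := inter_eq_self_of_subset_left hA'
  have hRHS1 : ∫ x in A, U N f x ∂(rhoN N) = ∫ x in A, (∑' k, g k x) := by
    rw [setIntegral_rhoN hN hA, hAeq]
    refine setIntegral_congr_fun hA (fun x hx => ?_)
    rw [U, ← tsum_mul_left]
  -- prepare for integral_tsum
  have hgm : ∀ k, AEStronglyMeasurable (g k) (volume.restrict A) := by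
    intro k
    apply AEStronglyMeasurable.mul
    · exact (D_meas.aestronglyMeasurable)
    · exact ((PNi_meas N (N + k)).aestronglyMeasurable).mul (aesm_comp hN hf k hA hA')
  have hnormeq : ∀ k, ∫⁻ y in A, ‖g k y‖₊ ∂volume = ∫⁻ x in E k, ‖F x‖₊ ∂volume := by
    intro k
    rw [setLIntegral_congr hA1ae.symm, ← himage k]
    rw [Stmt4Aux.lintegral_image_eq_lintegral_abs_deriv_mul hA1m
      (fun y hy => (hasDeriv_uNi hN k (hAsub hy).1).hasDerivWithinAt)
      ((inj_uNi hN k).mono (hAsub.trans Ico_subset_Icc_self)) (fun x => (‖F x‖₊ : ℝ≥0∞))]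
    refine setLIntegral_congr_fun hA1m (fun y hy => ?_)
    have hyI : y ∈ Icc (0:ℝ) 1 := Ico_subset_Icc_self (hAsub hy)
    have hkey := key_alg hN k hyI (f (uNi N (N + k) y))
    rw [← enorm_eq_nnnorm, ← enorm_eq_nnnorm, Real.enorm_eq_ofReal_abs, Real.enorm_eq_ofReal_abs,
      ← ENNReal.ofReal_mul (abs_nonneg _)]
    congr 1
    simp only [hg, hF]
    rw [← hkey, abs_mul, abs_abs]
  have hsum : (∑' k, ∫⁻ y in A, ‖g k y‖₊ ∂volume) ≠ ⊤ := by
    have heq : (∑' k, ∫⁻ y in A, ‖g k y‖₊ ∂volume) = ∫⁻ x in ⋃ k, E k, ‖F x‖₊ ∂volume := by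
      rw [lintegral_iUnion hEmeas hEdisj]
      exact tsum_congr hnormeq
    rw [heq]
    have hle : ∫⁻ x in ⋃ k, E k, ‖F x‖₊ ∂volume ≤ ∫⁻ x in Icc (0:ℝ) 1, ‖F x‖₊ ∂volume :=
      lintegral_mono_set (iUnion_subset hEsub)
    exact ne_top_of_le_ne_top hFint.2.ne hle
  have hRHS : ∫ x in A, (∑' k, g k x) = ∑' k, ∫ x in A, g k x := by
    exact integral_tsum hgm hsum
  rw [hLHS, hRHS1, hRHS]
  refine tsum_congr (fun k => ?_)
  exact setIntegral_congr_set hA1ae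
end

section
/- For every real-valued f ∈ C¹([0,1]), the function Uf is differentiable on [0,1] and (Uf)′(x) = −V(f′)(x) for all x ∈ [0,1]. -/
open MeasureTheory Set Filter Topology

/-- The operator V with (Uf)' = -V f':
`V g(x) = -Σ_{i ≥ N} [ (i+1-N)/(x+i)² ∫_{u_{N,i}(x)}^{u_{N,i+1}(x)} g
          + N(x+N-1)/((x+i-1)(x+i)³) g(u_{N,i}(x)) ]`, indexed by i = N + k. -/
noncomputable def V (N : ℕ) (g : ℝ → ℝ) (x : ℝ) : ℝ :=
  -∑' k : ℕ,
    ((((N + k : ℕ) : ℝ) + 1 - N) / (x + ((N + k : ℕ) : ℝ)) ^ 2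
        * (∫ u in (uNi N (N + k) x)..(uNi N (N + k + 1) x), g u)
      + ((N : ℝ) * (x + N - 1)) / ((x + ((N + k : ℕ) : ℝ) - 1) * (x + ((N + k : ℕ) : ℝ)) ^ 3)
        * g (uNi N (N + k) x))

/-! ### Auxiliary: a global `C¹` extension of `f` beyond `[0,1]`. -/

noncomputable def gExt (f f' : ℝ → ℝ) (y : ℝ) : ℝ :=
  if y < 0 then f 0 + f' 0 * y else if y ≤ 1 then f y else f 1 + f' 1 * (y - 1)

noncomputable def gExt' (f f' : ℝ → ℝ) (y : ℝ) : ℝ :=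
  if y < 0 then f' 0 else if y ≤ 1 then f' y else f' 1

lemma gExt_eq (f f' : ℝ → ℝ) {y : ℝ} (hy : y ∈ Set.Icc (0:ℝ) 1) : gExt f f' y = f y := by
  simp [gExt, not_lt.2 hy.1, hy.2]

lemma gExt'_eq (f f' : ℝ → ℝ) {y : ℝ} (hy : y ∈ Set.Icc (0:ℝ) 1) : gExt' f f' y = f' y := by
  simp [gExt', not_lt.2 hy.1, hy.2]

lemma gExt_hasDerivAt (f f' : ℝ → ℝ)
    (hderiv : ∀ x ∈ Set.Icc (0:ℝ) 1, HasDerivWithinAt f (f' x) (Set.Icc (0:ℝ) 1) x) :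
    ∀ y : ℝ, HasDerivAt (gExt f f') (gExt' f f' y) y := by
  intro y
  have haff0 : ∀ z : ℝ, HasDerivAt (fun w : ℝ => f 0 + f' 0 * w) (f' 0) z := by
    intro z; simpa using ((hasDerivAt_id z).const_mul (f' 0)).const_add (f 0)
  have haff1 : ∀ z : ℝ, HasDerivAt (fun w : ℝ => f 1 + f' 1 * (w - 1)) (f' 1) z := by
    intro z
    simpa using (((hasDerivAt_id z).sub_const 1).const_mul (f' 1)).const_add (f 1)
  rcases lt_or_ge y 0 with hy | hy
  · -- y < 0
    have : gExt f f' =ᶠ[𝓝 y] fun w : ℝ => f 0 + f' 0 * w := by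
      filter_upwards [Iio_mem_nhds hy] with z hz
      simp [gExt, Set.mem_Iio.mp hz]
    have h := (haff0 y).congr_of_eventuallyEq this
    simpa [gExt', hy] using h
  rcases eq_or_lt_of_le hy with hy0 | hy0
  · -- y = 0
    subst hy0
    have hL : HasDerivWithinAt (gExt f f') (f' 0) (Set.Iic 0) 0 := by
      refine (haff0 0).hasDerivWithinAt.congr (fun z hz => ?_) ?_
      · rcases lt_or_eq_of_le (Set.mem_Iic.mp hz) with h | h
        · simp [gExt, h]
        · subst h; simp [gExt]
      · simp [gExt]
    have hR : HasDerivWithinAt (gExt f f') (f' 0) (Set.Ici 0) 0 := by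
      have h1 : HasDerivWithinAt f (f' 0) (Set.Icc 0 1) 0 :=
        hderiv 0 ⟨le_refl _, zero_le_one⟩
      have h2 : HasDerivWithinAt (gExt f f') (f' 0) (Set.Icc 0 1) 0 :=
        h1.congr (fun z hz => gExt_eq f f' hz) (gExt_eq f f' ⟨le_refl _, zero_le_one⟩)
      exact h2.mono_of_mem_nhdsWithin (Icc_mem_nhdsGE_of_mem ⟨le_refl _, zero_lt_one⟩)
    have := hL.union hR
    rw [Set.Iic_union_Ici, hasDerivWithinAt_univ] at this
    simpa [gExt'] using this
  rcases lt_trichotomy y 1 with hy1 | hy1 | hy1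
  · -- 0 < y < 1
    have hmem : Set.Ioo (0:ℝ) 1 ∈ 𝓝 y := Ioo_mem_nhds hy0 hy1
    have h1 : HasDerivAt f (f' y) y :=
      (hderiv y ⟨le_of_lt hy0, le_of_lt hy1⟩).hasDerivAt
        (mem_of_superset hmem Set.Ioo_subset_Icc_self)
    have heq : gExt f f' =ᶠ[𝓝 y] f := by
      filter_upwards [hmem] with z hz
      exact gExt_eq f f' (Set.Ioo_subset_Icc_self hz)
    have h := h1.congr_of_eventuallyEq heq
    simpa [gExt', not_lt.2 hy0.le, hy1.le] using h
  · -- y = 1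
    subst hy1
    have hL : HasDerivWithinAt (gExt f f') (f' 1) (Set.Iic 1) 1 := by
      have h1 : HasDerivWithinAt f (f' 1) (Set.Icc 0 1) 1 :=
        hderiv 1 ⟨zero_le_one, le_refl _⟩
      have h2 : HasDerivWithinAt (gExt f f') (f' 1) (Set.Icc 0 1) 1 :=
        h1.congr (fun z hz => gExt_eq f f' hz) (gExt_eq f f' ⟨zero_le_one, le_refl _⟩)
      exact h2.mono_of_mem_nhdsWithin (Icc_mem_nhdsLE_of_mem ⟨zero_lt_one, le_refl _⟩)
    have hR : HasDerivWithinAt (gExt f f') (f' 1) (Set.Ici 1) 1 := by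
      refine (haff1 1).hasDerivWithinAt.congr (fun z hz => ?_) ?_
      · rcases lt_or_eq_of_le (Set.mem_Ici.mp hz) with h | h
        · simp [gExt, not_lt.2 (le_trans zero_le_one h.le), not_le.2 h]
        · rw [← h]; simp [gExt]
      · simp [gExt]
    have := hL.union hR
    rw [Set.Iic_union_Ici, hasDerivWithinAt_univ] at this
    simpa [gExt', not_lt.2 (zero_le_one (α := ℝ))] using this
  · -- y > 1
    have : gExt f f' =ᶠ[𝓝 y] fun w : ℝ => f 1 + f' 1 * (w - 1) := by
      filter_upwards [Ioi_mem_nhds hy1] with z hz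
      simp [gExt, not_lt.2 (le_trans zero_le_one (le_of_lt (Set.mem_Ioi.mp hz))), not_le.2 (Set.mem_Ioi.mp hz)]
    have h := (haff1 y).congr_of_eventuallyEq this
    simpa [gExt', not_lt.2 (le_trans zero_le_one hy1.le), not_le.2 hy1] using h

/-! ### Auxiliary estimates for the terms of the series. -/

lemma PNi_eq (N k : ℕ) (y : ℝ) :
    PNi N (N+k) y = (y + (N:ℝ) - 1)/((y + ((N:ℝ)+k)) * (y + ((N:ℝ)+k) - 1)) := by
  simp [PNi, Nat.cast_add]

lemma uNi_eq (N k : ℕ) (y : ℝ) : uNi N (N+k) y = 1 - (N:ℝ)/(y + ((N:ℝ)+k)) := by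
  simp [uNi, Nat.cast_add]

lemma aux_A_lb (N k : ℕ) (hN : 2 ≤ N) {y : ℝ} (hy : -(1/4:ℝ) < y) :
    (k:ℝ) + 7/4 ≤ y + ((N:ℝ)+k) := by
  have h : (2:ℝ) ≤ N := by exact_mod_cast hN
  linarith

lemma Pd_bound (N k : ℕ) (hN : 2 ≤ N) {y : ℝ} (hy : y ∈ Set.Ioo (-(1/4):ℝ) (5/4)) :
    |(k:ℝ)/(y + ((N:ℝ)+k) - 1)^2 - ((k:ℝ)+1)/(y + ((N:ℝ)+k))^2| ≤ 8/((k:ℝ)+1)^2 := by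
  set a := y + ((N:ℝ)+k) with ha
  have hk : (0:ℝ) ≤ k := Nat.cast_nonneg k
  have h1 : (k:ℝ) + 7/4 ≤ a := aux_A_lb N k hN hy.1
  have h2 : (0:ℝ) < a - 1 := by linarith
  have h0 : (0:ℝ) < a := by linarith
  have hka : (k:ℝ) + 1 ≤ a := by linarith
  have key : (k:ℝ)/(a-1)^2 - ((k:ℝ)+1)/a^2
      = ((k:ℝ)*a^2 - ((k:ℝ)+1)*(a-1)^2)/((a-1)^2 * a^2) := by
    field_simp
  rw [key, abs_div, abs_of_pos (by positivity : (0:ℝ) < (a-1)^2 * a^2),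
    div_le_div_iff₀ (by positivity) (by positivity)]
  have hn : |(k:ℝ)*a^2 - ((k:ℝ)+1)*(a-1)^2| ≤ 4*a^2 := by
    rw [abs_le]
    constructor
    · nlinarith [mul_le_mul_of_nonneg_left hka h0.le, mul_nonneg hk h0.le]
    · nlinarith [mul_le_mul_of_nonneg_left hka h0.le, mul_nonneg hk h0.le]
  have hq : ((k:ℝ)+1)^2 ≤ 2*(a-1)^2 := by nlinarith
  calc |(k:ℝ)*a^2 - ((k:ℝ)+1)*(a-1)^2| * ((k:ℝ)+1)^2
      ≤ (4*a^2) * (2*(a-1)^2) := mul_le_mul hn hq (by positivity) (by positivity)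
    _ = 8 * ((a-1)^2 * a^2) := by ring

lemma PNi_bound (N k : ℕ) (hN : 2 ≤ N) {y : ℝ} (hy : y ∈ Set.Ioo (-(1/4):ℝ) (5/4)) :
    |PNi N (N+k) y| ≤ ((N:ℝ)+1)/((k:ℝ)+1)^2 := by
  rw [PNi_eq]
  set a := y + ((N:ℝ)+k) with ha
  have hk : (0:ℝ) ≤ k := Nat.cast_nonneg k
  have hNr : (2:ℝ) ≤ N := by exact_mod_cast hN
  have h1 : (k:ℝ) + 7/4 ≤ a := aux_A_lb N k hN hy.1
  have h2 : (0:ℝ) < a - 1 := by linarith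
  have h0 : (0:ℝ) < a := by linarith
  have hnum0 : (0:ℝ) < y + N - 1 := by have := hy.1; linarith
  have hnum1 : y + (N:ℝ) - 1 ≤ (N:ℝ) + 1 := by have := hy.2; linarith
  have hden : ((k:ℝ)+1)^2 ≤ a * (a-1) := by nlinarith
  rw [abs_div, abs_of_pos hnum0, abs_of_pos (mul_pos h0 h2)]
  exact div_le_div₀ (by positivity) hnum1 (by positivity) hden

lemma uNi_mem (N k : ℕ) (hN : 2 ≤ N) {y : ℝ} (hy : y ∈ Set.Ioo (-(1/4):ℝ) (5/4)) :
    uNi N (N+k) y ∈ Set.Icc (-1:ℝ) 1 := by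
  rw [uNi_eq]
  have hk : (0:ℝ) ≤ k := Nat.cast_nonneg k
  have hNr : (2:ℝ) ≤ N := by exact_mod_cast hN
  have h1 : (k:ℝ) + 7/4 ≤ y + ((N:ℝ)+k) := aux_A_lb N k hN hy.1
  have h0 : (0:ℝ) < y + ((N:ℝ)+k) := by linarith
  constructor
  · have hd : (N:ℝ)/(y + ((N:ℝ)+k)) ≤ 2 := by
      rw [div_le_iff₀ h0]
      have := hy.1
      linarith
    linarith
  · have : (0:ℝ) ≤ (N:ℝ)/(y + ((N:ℝ)+k)) := by positivity
    linarith

lemma uNi_mem01 (N k : ℕ) (hN : 2 ≤ N) {y : ℝ} (hy : y ∈ Set.Icc (0:ℝ) 1) :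
    uNi N (N+k) y ∈ Set.Icc (0:ℝ) 1 := by
  rw [uNi_eq]
  have hk : (0:ℝ) ≤ k := Nat.cast_nonneg k
  have hNr : (2:ℝ) ≤ N := by exact_mod_cast hN
  have h0 : (0:ℝ) < y + ((N:ℝ)+k) := by have := hy.1; linarith
  constructor
  · have hd : (N:ℝ)/(y + ((N:ℝ)+k)) ≤ 1 := by
      rw [div_le_one h0]
      have := hy.1
      linarith
    linarith
  · have : (0:ℝ) ≤ (N:ℝ)/(y + ((N:ℝ)+k)) := by positivity
    linarith

noncomputable def Dterm (N : ℕ) (g G' : ℝ → ℝ) (k : ℕ) (y : ℝ) : ℝ :=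
  ((k:ℝ)/(y + ((N:ℝ)+k) - 1)^2 - ((k:ℝ)+1)/(y + ((N:ℝ)+k))^2) * g (uNi N (N+k) y)
  + PNi N (N+k) y * ((N:ℝ)/(y + ((N:ℝ)+k))^2) * G' (uNi N (N+k) y)

lemma Tterm_hasDerivAt (N k : ℕ) (hN : 2 ≤ N) (g G' : ℝ → ℝ)
    (hg : ∀ y, HasDerivAt g (G' y) y) {y : ℝ} (hy : y ∈ Set.Ioo (-(1/4):ℝ) (5/4)) :
    HasDerivAt (fun z => PNi N (N+k) z * g (uNi N (N+k) z)) (Dterm N g G' k y) y := by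
  have hk : (0:ℝ) ≤ k := Nat.cast_nonneg k
  have h1 : (k:ℝ) + 7/4 ≤ y + ((N:ℝ)+k) := aux_A_lb N k hN hy.1
  have h2 : (0:ℝ) < y + ((N:ℝ)+k) - 1 := by linarith
  have h0 : (0:ℝ) < y + ((N:ℝ)+k) := by linarith
  have hu : HasDerivAt (fun z => uNi N (N+k) z) ((N:ℝ)/(y + ((N:ℝ)+k))^2) y := by
    have hid : HasDerivAt (fun z : ℝ => z + ((N:ℝ)+k)) 1 y := (hasDerivAt_id y).add_const _
    have hinv := hid.inv (ne_of_gt h0)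
    have h3 := hinv.const_mul (N:ℝ)
    have h4 := (hasDerivAt_const y (1:ℝ)).sub h3
    have he : (fun z => uNi N (N+k) z) = fun z => 1 - (N:ℝ)*((z + ((N:ℝ)+k))⁻¹) := by
      funext z
      rw [uNi_eq, div_eq_mul_inv]
    rw [he]
    refine h4.congr_deriv ?_
    ring
  have hP : HasDerivAt (fun z => PNi N (N+k) z)
      ((k:ℝ)/(y + ((N:ℝ)+k) - 1)^2 - ((k:ℝ)+1)/(y + ((N:ℝ)+k))^2) y := by
    have hnum : HasDerivAt (fun z : ℝ => z + (N:ℝ) - 1) 1 y :=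
      ((hasDerivAt_id y).add_const _).sub_const 1
    have hd1 : HasDerivAt (fun z : ℝ => z + ((N:ℝ)+k)) 1 y := (hasDerivAt_id y).add_const _
    have hd2 : HasDerivAt (fun z : ℝ => z + ((N:ℝ)+k) - 1) 1 y := hd1.sub_const 1
    have hden := hd1.mul hd2
    have hne : (y + ((N:ℝ)+k)) * (y + ((N:ℝ)+k) - 1) ≠ 0 := ne_of_gt (mul_pos h0 h2)
    have hdiv := hnum.div hden hne
    have heq : (fun z => PNi N (N+k) z)
        = fun z => (z + (N:ℝ) - 1)/((z + ((N:ℝ)+k)) * (z + ((N:ℝ)+k) - 1)) := by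
      funext z; rw [PNi_eq]
    rw [heq]
    refine hdiv.congr_deriv ?_
    simp only [Pi.mul_apply]
    field_simp
    ring
  have H := hP.mul ((hg (uNi N (N+k) y)).comp y hu)
  simp only [Function.comp] at H
  refine H.congr_deriv ?_
  rw [Dterm]
  ring

lemma Dterm_bound (N k : ℕ) (hN : 2 ≤ N) (g G' : ℝ → ℝ) (Mg MG' : ℝ)
    (hgb : ∀ u ∈ Set.Icc (-1:ℝ) 1, |g u| ≤ Mg) (hG'b : ∀ u ∈ Set.Icc (-1:ℝ) 1, |G' u| ≤ MG')
    {y : ℝ} (hy : y ∈ Set.Ioo (-(1/4):ℝ) (5/4)) :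
    |Dterm N g G' k y| ≤ (8*Mg + ((N:ℝ)+1)*N*MG')/((k:ℝ)+1)^2 := by
  have hk : (0:ℝ) ≤ k := Nat.cast_nonneg k
  have h1 : (k:ℝ) + 7/4 ≤ y + ((N:ℝ)+k) := aux_A_lb N k hN hy.1
  have h0 : (0:ℝ) < y + ((N:ℝ)+k) := by linarith
  have hMg0 : 0 ≤ Mg := le_trans (abs_nonneg _) (hgb 0 (by norm_num))
  have hMG'0 : 0 ≤ MG' := le_trans (abs_nonneg _) (hG'b 0 (by norm_num))
  have hum := uNi_mem N k hN hy
  have hu' : (N:ℝ)/(y + ((N:ℝ)+k))^2 ≤ (N:ℝ) := by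
    rw [div_le_iff₀ (by positivity)]
    have ha1 : (1:ℝ) ≤ (y + ((N:ℝ)+k))^2 := by nlinarith
    nlinarith [mul_le_mul_of_nonneg_left ha1 (Nat.cast_nonneg N : (0:ℝ) ≤ (N:ℝ))]
  have hu'0 : (0:ℝ) ≤ (N:ℝ)/(y + ((N:ℝ)+k))^2 := by positivity
  rw [Dterm]
  calc |((k:ℝ)/(y + ((N:ℝ)+k) - 1)^2 - ((k:ℝ)+1)/(y + ((N:ℝ)+k))^2) * g (uNi N (N+k) y)
      + PNi N (N+k) y * ((N:ℝ)/(y + ((N:ℝ)+k))^2) * G' (uNi N (N+k) y)|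
      ≤ |((k:ℝ)/(y + ((N:ℝ)+k) - 1)^2 - ((k:ℝ)+1)/(y + ((N:ℝ)+k))^2)| * |g (uNi N (N+k) y)|
        + |PNi N (N+k) y| * ((N:ℝ)/(y + ((N:ℝ)+k))^2) * |G' (uNi N (N+k) y)| := by
        refine (abs_add_le _ _).trans ?_
        rw [abs_mul, abs_mul, abs_mul, abs_of_nonneg hu'0]
    _ ≤ (8/((k:ℝ)+1)^2) * Mg + (((N:ℝ)+1)/((k:ℝ)+1)^2) * (N:ℝ) * MG' := by
        gcongr
        · exact Pd_bound N k hN hy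
        · exact hgb _ hum
        · exact PNi_bound N k hN hy
        · exact hG'b _ hum
    _ = (8*Mg + ((N:ℝ)+1)*N*MG')/((k:ℝ)+1)^2 := by
        field_simp

lemma summable_const_div_sq (C : ℝ) : Summable (fun k : ℕ => C/((k:ℝ)+1)^2) := by
  have h : Summable (fun n : ℕ => 1/((n:ℝ))^2) :=
    Real.summable_one_div_nat_pow.mpr one_lt_two
  have h2 := (summable_nat_add_iff 1).mpr h
  have h3 : Summable (fun n : ℕ => 1/((n:ℝ)+1)^2) := by
    refine h2.congr fun n => ?_
    push_cast
    ring
  have := h3.mul_left C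
  refine this.congr fun n => ?_
  rw [mul_one_div]

set_option maxHeartbeats 1000000 in
theorem stmt8 (N : ℕ) (hN : 2 ≤ N) (f f' : ℝ → ℝ)
    (hderiv : ∀ x ∈ Set.Icc (0:ℝ) 1, HasDerivWithinAt f (f' x) (Set.Icc (0:ℝ) 1) x)
    (hcont : ContinuousOn f' (Set.Icc (0:ℝ) 1)) :
    ∀ x ∈ Set.Icc (0:ℝ) 1,
      HasDerivWithinAt (U N f) (-(V N f' x)) (Set.Icc (0:ℝ) 1) x := by
  have hNr : (2:ℝ) ≤ (N:ℝ) := by exact_mod_cast hN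
  have hfc : ContinuousOn f (Set.Icc 0 1) := fun y hy => (hderiv y hy).continuousWithinAt
  obtain ⟨Mf, hMf⟩ := isCompact_Icc.exists_bound_of_continuousOn hfc
  obtain ⟨Mf', hMf'⟩ := isCompact_Icc.exists_bound_of_continuousOn hcont
  simp only [Real.norm_eq_abs] at hMf hMf'
  have hMf0 : 0 ≤ Mf := le_trans (abs_nonneg _) (hMf 0 ⟨le_refl _, zero_le_one⟩)
  have hMf'0 : 0 ≤ Mf' := le_trans (abs_nonneg _) (hMf' 0 ⟨le_refl _, zero_le_one⟩)
  set g : ℝ → ℝ := gExt f f' with hgdef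
  set G' : ℝ → ℝ := gExt' f f' with hG'def
  have hg : ∀ y, HasDerivAt g (G' y) y := gExt_hasDerivAt f f' hderiv
  have hgf : ∀ y ∈ Set.Icc (0:ℝ) 1, g y = f y := fun y hy => gExt_eq f f' hy
  have hG'f : ∀ y ∈ Set.Icc (0:ℝ) 1, G' y = f' y := fun y hy => gExt'_eq f f' hy
  have hgb : ∀ y ∈ Set.Icc (-1:ℝ) 1, |g y| ≤ Mf + Mf' := by
    intro y hy
    rcases lt_or_ge y 0 with h | h
    · have hgy : g y = f 0 + f' 0 * y := by simp [hgdef, gExt, h]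
      rw [hgy]
      calc |f 0 + f' 0 * y| ≤ |f 0| + |f' 0| * |y| := by
            refine (abs_add_le _ _).trans ?_
            rw [abs_mul]
        _ ≤ Mf + Mf' * 1 := by
            have hy1 : |y| ≤ 1 := abs_le.2 ⟨hy.1, hy.2⟩
            gcongr
            · exact hMf 0 ⟨le_refl _, zero_le_one⟩
            · exact hMf' 0 ⟨le_refl _, zero_le_one⟩
        _ = Mf + Mf' := by ring
    · rw [hgf y ⟨h, hy.2⟩]
      exact le_trans (hMf y ⟨h, hy.2⟩) (by linarith)
  have hG'b : ∀ y ∈ Set.Icc (-1:ℝ) 1, |G' y| ≤ Mf' := by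
    intro y hy
    rcases lt_or_ge y 0 with h | h
    · have hgy : G' y = f' 0 := by simp [hG'def, gExt', h]
      rw [hgy]
      exact hMf' 0 ⟨le_refl _, zero_le_one⟩
    · rw [hG'f y ⟨h, hy.2⟩]
      exact hMf' y ⟨h, hy.2⟩
  have hIccs : Set.Icc (0:ℝ) 1 ⊆ Set.Ioo (-(1/4):ℝ) (5/4) := fun y hy =>
    ⟨by linarith [hy.1], by linarith [hy.2]⟩
  have h0s : (0:ℝ) ∈ Set.Ioo (-(1/4):ℝ) (5/4) := hIccs ⟨le_refl _, zero_le_one⟩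
  -- summability at the base point 0
  have hsum0 : Summable (fun k : ℕ => PNi N (N+k) 0 * g (uNi N (N+k) 0)) := by
    apply Summable.of_norm_bounded (summable_const_div_sq (((N:ℝ)+1)*(Mf+Mf')))
    intro k
    rw [Real.norm_eq_abs, abs_mul]
    calc |PNi N (N+k) 0| * |g (uNi N (N+k) 0)|
        ≤ (((N:ℝ)+1)/((k:ℝ)+1)^2) * (Mf+Mf') :=
          mul_le_mul (PNi_bound N k hN h0s) (hgb _ (uNi_mem N k hN h0s))
            (abs_nonneg _) (by positivity)
      _ = (((N:ℝ)+1)*(Mf+Mf'))/((k:ℝ)+1)^2 := by ring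
  intro x hx
  have hxs : x ∈ Set.Ioo (-(1/4):ℝ) (5/4) := hIccs hx
  have hx0 : (0:ℝ) ≤ x := hx.1
  have hx1 : x ≤ 1 := hx.2
  -- the differentiated series
  have hder : HasDerivAt (fun z => ∑' k : ℕ, PNi N (N+k) z * g (uNi N (N+k) z))
      (∑' k : ℕ, Dterm N g G' k x) x := by
    refine hasDerivAt_tsum_of_isPreconnected
      (summable_const_div_sq (8*(Mf+Mf') + ((N:ℝ)+1)*N*Mf')) isOpen_Ioo
      (convex_Ioo _ _).isPreconnected
      (fun k y hy => Tterm_hasDerivAt N k hN g G' hg hy)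
      (fun k y hy => ?_) h0s hsum0 hxs
    rw [Real.norm_eq_abs]
    exact Dterm_bound N k hN g G' (Mf+Mf') Mf' hgb hG'b hy
  have hUeq : ∀ y ∈ Set.Icc (0:ℝ) 1,
      U N f y = ∑' k : ℕ, PNi N (N+k) y * g (uNi N (N+k) y) := by
    intro y hy
    rw [U]
    exact tsum_congr fun k => by rw [hgf _ (uNi_mem01 N k hN hy)]
  have hDW : HasDerivWithinAt (U N f) (∑' k : ℕ, Dterm N g G' k x) (Set.Icc (0:ℝ) 1) x :=
    (hder.hasDerivWithinAt).congr hUeq (hUeq x hx)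
  -- It remains to identify the derivative with -(V N f' x).
  -- notation
  set tk : ℕ → ℝ := fun k => (((k:ℝ)+1)/(x + ((N:ℝ)+k))^2)
      * ∫ u in (uNi N (N+k) x)..(uNi N (N+(k+1)) x), f' u with hTk
  set Rk : ℕ → ℝ := fun k => PNi N (N+k) x * ((N:ℝ)/(x + ((N:ℝ)+k))^2) * f' (uNi N (N+k) x)
    with hRk
  set sk : ℕ → ℝ := fun k => ((k:ℝ)/(x + ((N:ℝ)+k) - 1)^2 - ((k:ℝ)+1)/(x + ((N:ℝ)+k))^2)
      * f (uNi N (N+k) x) with hsk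
  set bk : ℕ → ℝ := fun k => (((k:ℝ)+1)/(x + ((N:ℝ)+k))^2) * f (uNi N (N+(k+1)) x) with hbk
  -- basic facts for this x
  have hAx : ∀ k : ℕ, (k:ℝ) + 2 ≤ x + ((N:ℝ)+k) := by
    intro k
    linarith
  have hAx0 : ∀ k : ℕ, (0:ℝ) < x + ((N:ℝ)+k) := by
    intro k
    have := hAx k
    have hk : (0:ℝ) ≤ k := Nat.cast_nonneg k
    linarith
  have hAx1 : ∀ k : ℕ, (0:ℝ) < x + ((N:ℝ)+k) - 1 := by
    intro k
    have := hAx k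
    have hk : (0:ℝ) ≤ k := Nat.cast_nonneg k
    linarith
  -- FTC
  have hFTC : ∀ k : ℕ, (∫ u in (uNi N (N+k) x)..(uNi N (N+(k+1)) x), f' u)
      = f (uNi N (N+(k+1)) x) - f (uNi N (N+k) x) := by
    intro k
    have hmem1 := uNi_mem01 N k hN hx
    have hmem2 := uNi_mem01 N (k+1) hN hx
    have hsub : Set.uIcc (uNi N (N+k) x) (uNi N (N+(k+1)) x) ⊆ Set.Icc (0:ℝ) 1 := by
      rw [← Set.uIcc_of_le (zero_le_one (α := ℝ))]
      exact Set.uIcc_subset_uIcc (by rwa [Set.uIcc_of_le (zero_le_one (α := ℝ))])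
        (by rwa [Set.uIcc_of_le (zero_le_one (α := ℝ))])
    have hderivs : ∀ t ∈ Set.uIcc (uNi N (N+k) x) (uNi N (N+(k+1)) x),
        HasDerivAt g (f' t) t := by
      intro t ht
      have := hg t
      rwa [hG'f t (hsub ht)] at this
    have hint : IntervalIntegrable f' volume (uNi N (N+k) x) (uNi N (N+(k+1)) x) :=
      (hcont.mono hsub).intervalIntegrable
    rw [intervalIntegral.integral_eq_sub_of_hasDerivAt hderivs hint,
      hgf _ hmem2, hgf _ hmem1]
  -- summabilities
  have hsumD : Summable (fun k => Dterm N g G' k x) := by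
    apply Summable.of_norm_bounded
      (summable_const_div_sq (8*(Mf+Mf') + ((N:ℝ)+1)*N*Mf'))
    intro k
    rw [Real.norm_eq_abs]
    exact Dterm_bound N k hN g G' (Mf+Mf') Mf' hgb hG'b hxs
  have hsumR : Summable Rk := by
    apply Summable.of_norm_bounded (summable_const_div_sq (((N:ℝ)+1)*((N:ℝ)*Mf')))
    intro k
    rw [Real.norm_eq_abs, hRk]
    have hk : (0:ℝ) ≤ k := Nat.cast_nonneg k
    have h0 := hAx0 k
    have hu' : (N:ℝ)/(x + ((N:ℝ)+k))^2 ≤ (N:ℝ) := by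
      rw [div_le_iff₀ (by positivity)]
      have ha1 : (1:ℝ) ≤ (x + ((N:ℝ)+k))^2 := by nlinarith [hAx k]
      nlinarith [mul_le_mul_of_nonneg_left ha1 (Nat.cast_nonneg N : (0:ℝ) ≤ (N:ℝ))]
    have hu'0 : (0:ℝ) ≤ (N:ℝ)/(x + ((N:ℝ)+k))^2 := by positivity
    calc |PNi N (N+k) x * ((N:ℝ)/(x + ((N:ℝ)+k))^2) * f' (uNi N (N+k) x)|
        = |PNi N (N+k) x| * ((N:ℝ)/(x + ((N:ℝ)+k))^2) * |f' (uNi N (N+k) x)| := by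
          rw [abs_mul, abs_mul, abs_of_nonneg hu'0]
      _ ≤ (((N:ℝ)+1)/((k:ℝ)+1)^2) * (N:ℝ) * Mf' := by
          gcongr
          · exact PNi_bound N k hN hxs
          · exact hMf' _ (uNi_mem01 N k hN hx)
      _ = (((N:ℝ)+1)*((N:ℝ)*Mf'))/((k:ℝ)+1)^2 := by ring
  have hDsk : ∀ k, Dterm N g G' k x = sk k + Rk k := by
    intro k
    rw [Dterm, hsk, hRk]
    rw [hgf _ (uNi_mem01 N k hN hx), hG'f _ (uNi_mem01 N k hN hx)]
  have hsumsk : Summable sk := by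
    refine (hsumD.sub hsumR).congr fun k => ?_
    rw [hDsk k]
    ring
  have hsumtk : Summable tk := by
    apply Summable.of_norm_bounded (summable_const_div_sq ((N:ℝ)*Mf'))
    intro k
    rw [Real.norm_eq_abs, hTk]
    have hk : (0:ℝ) ≤ k := Nat.cast_nonneg k
    have h0 := hAx0 k
    have hIoc : Set.uIoc (uNi N (N+k) x) (uNi N (N+(k+1)) x) ⊆ Set.Icc (0:ℝ) 1 := by
      refine subset_trans Set.Ioc_subset_Icc_self ?_
      rw [← Set.uIcc_of_le (zero_le_one (α := ℝ))]
      exact Set.uIcc_subset_uIcc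
        (by rw [Set.uIcc_of_le (zero_le_one (α := ℝ))]; exact uNi_mem01 N k hN hx)
        (by rw [Set.uIcc_of_le (zero_le_one (α := ℝ))]; exact uNi_mem01 N (k+1) hN hx)
    have hintb : |∫ u in (uNi N (N+k) x)..(uNi N (N+(k+1)) x), f' u|
        ≤ Mf' * |uNi N (N+(k+1)) x - uNi N (N+k) x| := by
      have := intervalIntegral.norm_integral_le_of_norm_le_const
        (C := Mf') (a := uNi N (N+k) x) (b := uNi N (N+(k+1)) x) (f := f')
        (fun t ht => by rw [Real.norm_eq_abs]; exact hMf' t (hIoc ht))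
      simpa [Real.norm_eq_abs] using this
    have hdiff : |uNi N (N+(k+1)) x - uNi N (N+k) x| ≤ (N:ℝ)/((k:ℝ)+1)^2 := by
      rw [uNi_eq, uNi_eq]
      have hd : (1 - (N:ℝ)/(x + ((N:ℝ)+(k+1:ℕ)))) - (1 - (N:ℝ)/(x + ((N:ℝ)+k)))
          = (N:ℝ)/((x + ((N:ℝ)+k)) * (x + ((N:ℝ)+k) + 1)) := by
        have h1 := hAx0 k
        have h2 : (0:ℝ) < x + ((N:ℝ)+k) + 1 := by linarith
        have hc : (x + ((N:ℝ)+(k+1:ℕ))) = x + ((N:ℝ)+k) + 1 := by push_cast; ring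
        rw [hc]
        field_simp
        ring
      rw [hd, abs_of_nonneg (by positivity)]
      have hprod : ((k:ℝ)+1)^2 ≤ (x + ((N:ℝ)+k)) * (x + ((N:ℝ)+k) + 1) := by
        nlinarith [hAx k]
      gcongr
    have hcoefb : |((k:ℝ)+1)/(x + ((N:ℝ)+k))^2| ≤ 1 := by
      rw [abs_of_nonneg (by positivity), div_le_one (by positivity)]
      nlinarith [hAx k]
    calc |(((k:ℝ)+1)/(x + ((N:ℝ)+k))^2) * ∫ u in (uNi N (N+k) x)..(uNi N (N+(k+1)) x), f' u|
        = |((k:ℝ)+1)/(x + ((N:ℝ)+k))^2|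
          * |∫ u in (uNi N (N+k) x)..(uNi N (N+(k+1)) x), f' u| := abs_mul _ _
      _ ≤ 1 * (Mf' * ((N:ℝ)/((k:ℝ)+1)^2)) := by
          refine mul_le_mul hcoefb (hintb.trans ?_) (abs_nonneg _) zero_le_one
          exact mul_le_mul_of_nonneg_left hdiff hMf'0
      _ = ((N:ℝ)*Mf')/((k:ℝ)+1)^2 := by ring
  -- telescoping: ∑ sk = ∑ tk
  have hst0 : sk 0 - tk 0 = -(bk 0) := by
    simp only [hsk, hTk, hbk]
    rw [hFTC 0]
    push_cast
    ring
  have hstk : ∀ k : ℕ, sk (k+1) - tk (k+1) = bk k - bk (k+1) := by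
    intro k
    simp only [hsk, hTk, hbk]
    rw [hFTC (k+1)]
    push_cast
    ring
  have hpartial : ∀ n : ℕ, ∑ j ∈ Finset.range (n+1), (sk j - tk j) = -(bk n) := by
    intro n
    induction n with
    | zero => simpa using hst0
    | succ n ih =>
      rw [Finset.sum_range_succ, ih, hstk n]
      ring
  have hbk0 : Tendsto bk atTop (𝓝 0) := by
    apply squeeze_zero_norm (a := fun n : ℕ => Mf * (1/((n:ℝ)+1)))
    · intro n
      simp only [hbk, Real.norm_eq_abs]
      rw [abs_mul]
      have hk : (0:ℝ) ≤ n := Nat.cast_nonneg n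
      have h0 := hAx0 n
      have hcoefb : |((n:ℝ)+1)/(x + ((N:ℝ)+n))^2| ≤ 1/((n:ℝ)+1) := by
        rw [abs_of_nonneg (by positivity), div_le_div_iff₀ (by positivity) (by positivity)]
        nlinarith [hAx n]
      calc |((n:ℝ)+1)/(x + ((N:ℝ)+n))^2| * |f (uNi N (N+(n+1)) x)|
          ≤ (1/((n:ℝ)+1)) * Mf :=
            mul_le_mul hcoefb (hMf _ (uNi_mem01 N (n+1) hN hx)) (abs_nonneg _)
              (by positivity)
        _ = Mf * (1/((n:ℝ)+1)) := by ring
    · simpa using tendsto_one_div_add_atTop_nhds_zero_nat.const_mul Mf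
  have hsum_st : Summable (fun k => sk k - tk k) := hsumsk.sub hsumtk
  obtain ⟨L, hL⟩ := hsum_st
  have h2 : Tendsto (fun n => ∑ j ∈ Finset.range (n+1), (sk j - tk j)) atTop (𝓝 L) := by
    have := hL.tendsto_sum_nat.comp (tendsto_add_atTop_nat 1)
    exact this
  have h3 : Tendsto (fun n => -(bk n)) atTop (𝓝 L) :=
    h2.congr fun n => hpartial n
  have hL0 : L = 0 := by
    have h4 : Tendsto (fun n => -(bk n)) atTop (𝓝 (0:ℝ)) := by
      simpa using hbk0.neg
    exact tendsto_nhds_unique h3 h4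
  have hteq : ∑' k, sk k = ∑' k, tk k := by
    have h5 : ∑' k, (sk k - tk k) = 0 := by rw [hL.tsum_eq, hL0]
    rw [Summable.tsum_sub hsumsk hsumtk] at h5
    linarith
  -- identify -(V N f' x) with the sum of Dterm
  have hWtk : ∀ k : ℕ,
      ((((N + k : ℕ) : ℝ) + 1 - N) / (x + ((N + k : ℕ) : ℝ)) ^ 2
          * (∫ u in (uNi N (N + k) x)..(uNi N (N + k + 1) x), f' u)
        + ((N : ℝ) * (x + N - 1)) / ((x + ((N + k : ℕ) : ℝ) - 1) * (x + ((N + k : ℕ) : ℝ)) ^ 3)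
          * f' (uNi N (N + k) x)) = tk k + Rk k := by
    intro k
    have hcoef : PNi N (N+k) x * ((N:ℝ)/(x + ((N:ℝ)+k))^2)
        = ((N:ℝ)*(x + (N:ℝ) - 1))/((x + ((N:ℝ)+k) - 1) * (x + ((N:ℝ)+k))^3) := by
      rw [PNi_eq]
      have h0 := hAx0 k
      have h1 := hAx1 k
      field_simp
    have hc : ((N + k : ℕ) : ℝ) = (N:ℝ) + k := by push_cast; ring
    have hidx : N + k + 1 = N + (k+1) := by omega
    rw [hTk, hRk, hc, hidx, ← hcoef]
    ring
  have hkey : -(V N f' x) = ∑' k, Dterm N g G' k x := by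
    rw [V, neg_neg]
    calc (∑' k : ℕ,
        ((((N + k : ℕ) : ℝ) + 1 - N) / (x + ((N + k : ℕ) : ℝ)) ^ 2
            * (∫ u in (uNi N (N + k) x)..(uNi N (N + k + 1) x), f' u)
          + ((N : ℝ) * (x + N - 1)) / ((x + ((N + k : ℕ) : ℝ) - 1) * (x + ((N + k : ℕ) : ℝ)) ^ 3)
            * f' (uNi N (N + k) x)))
        = ∑' k, (tk k + Rk k) := tsum_congr hWtk
      _ = (∑' k, tk k) + ∑' k, Rk k := Summable.tsum_add hsumtk hsumR
      _ = (∑' k, sk k) + ∑' k, Rk k := by rw [hteq]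
      _ = ∑' k, (sk k + Rk k) := (Summable.tsum_add hsumsk hsumR).symm
      _ = ∑' k, Dterm N g G' k x := tsum_congr fun k => (hDsk k).symm
  rw [hkey]
  exact hDW
end

section
/- Let h : [0,∞) → ℝ be continuous and bounded, and define g : (0,1] → ℝ by g(u) = (N/(1−u)) h(Nu/(1−u)) − (N/(1−u) − 1) h(Nu/(1−u) + 1). Then for every x > 0, the partial sums Σ_{i=N}^{M} P_{N,i}(x) g(u_{N,i}(x)) converge as M → ∞, and their limit equals h(x); in other words, U g = h on (0,∞). -/
open MeasureTheory Set Filter Topology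

theorem stmt11 (N : ℕ) (hN : 2 ≤ N) (h : ℝ → ℝ)
    (hcont : ContinuousOn h (Set.Ici (0:ℝ)))
    (hbdd : ∃ M : ℝ, ∀ x ∈ Set.Ici (0:ℝ), |h x| ≤ M)
    (g : ℝ → ℝ)
    (hg : ∀ u ∈ Set.Ioc (0:ℝ) 1,
      g u = (N : ℝ) / (1 - u) * h ((N : ℝ) * u / (1 - u))
        - ((N : ℝ) / (1 - u) - 1) * h ((N : ℝ) * u / (1 - u) + 1)) :
    ∀ x : ℝ, 0 < x →
      Filter.Tendsto
        (fun M : ℕ => ∑ k ∈ Finset.range M, PNi N (N + k) x * g (uNi N (N + k) x))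
        Filter.atTop (nhds (h x)) := by
  intro x hx
  obtain ⟨M0, hM0⟩ := hbdd
  have hN1 : (2:ℝ) ≤ (N:ℝ) := by exact_mod_cast hN
  set a : ℕ → ℝ := fun k => (x + N - 1) * h (x + k) / (x + N + k - 1) with ha
  have key : ∀ k : ℕ, PNi N (N+k) x * g (uNi N (N+k) x) = a k - a (k+1) := by
    intro k
    have hk : (0:ℝ) ≤ (k:ℝ) := Nat.cast_nonneg k
    have h1 : (0:ℝ) < x + ((N:ℝ)+k) := by linarith
    have h2 : (0:ℝ) < x + ((N:ℝ)+k) - 1 := by linarith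
    have hi : ((N + k : ℕ) : ℝ) = (N : ℝ) + k := by push_cast; ring
    have hu : uNi N (N+k) x = 1 - (N:ℝ)/(x + ((N:ℝ)+k)) := by
      simp only [uNi, hi]
    have humem : uNi N (N+k) x ∈ Set.Ioc (0:ℝ) 1 := by
      rw [hu]
      constructor
      · have hlt : (N:ℝ)/(x+((N:ℝ)+k)) < 1 := by
          rw [div_lt_one h1]; linarith
        linarith
      · have hge : (0:ℝ) ≤ (N:ℝ)/(x+((N:ℝ)+k)) := by positivity
        linarith
    rw [hg _ humem, hu]
    have h1u : 1 - (1 - (N:ℝ)/(x+((N:ℝ)+k))) = (N:ℝ)/(x+((N:ℝ)+k)) := by ring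
    rw [h1u]
    have hNpos : (0:ℝ) < N := by linarith
    have e1 : (N:ℝ) / ((N:ℝ)/(x+((N:ℝ)+k))) = x + ((N:ℝ)+k) := by
      field_simp
    have e2 : (N:ℝ) * (1 - (N:ℝ)/(x+((N:ℝ)+k))) / ((N:ℝ)/(x+((N:ℝ)+k))) = x + k := by
      field_simp; ring
    rw [e1, e2]
    simp only [ha, PNi, hi]
    push_cast
    have h3 : x + ((N:ℝ) + k) - 1 ≠ 0 := by linarith
    have h4 : x + ((N:ℝ) + k) ≠ 0 := by linarith
    have h5 : x + (N:ℝ) + k - 1 ≠ 0 := by linarith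
    have h6 : x + (N:ℝ) + ((k:ℝ) + 1) - 1 ≠ 0 := by linarith
    field_simp
    ring
  have hsum : ∀ M : ℕ, ∑ k ∈ Finset.range M, PNi N (N+k) x * g (uNi N (N+k) x)
      = a 0 - a M := by
    intro M
    rw [Finset.sum_congr rfl (fun k _ => key k)]
    exact Finset.sum_range_sub' a M
  have ha0 : a 0 = h x := by
    have h5 : x + (N:ℝ) - 1 ≠ 0 := by linarith
    simp only [ha]
    push_cast
    simp only [add_zero]
    field_simp
  have haM : Tendsto a atTop (nhds 0) := by
    have hden : Tendsto (fun M : ℕ => x + (N:ℝ) + M - 1) atTop atTop := by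
      apply tendsto_atTop_add_const_right
      exact tendsto_atTop_add_const_left _ _ tendsto_natCast_atTop_atTop
    have hbound : ∀ᶠ M : ℕ in atTop, ‖a M‖ ≤ (x + N - 1) * M0 / (x + (N:ℝ) + M - 1) := by
      filter_upwards with M
      have hk : (0:ℝ) ≤ (M:ℝ) := Nat.cast_nonneg M
      have hd : (0:ℝ) < x + (N:ℝ) + M - 1 := by linarith
      have hnum : |h (x + M)| ≤ M0 := hM0 _ (by simp [Set.mem_Ici]; linarith)
      simp only [ha, Real.norm_eq_abs, abs_div]
      rw [abs_of_pos hd]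
      gcongr
      rw [abs_mul, abs_of_pos (by linarith : (0:ℝ) < x + (N:ℝ) - 1)]
      exact mul_le_mul_of_nonneg_left hnum (by linarith)
    have hlim : Tendsto (fun M : ℕ => (x + N - 1) * M0 / (x + (N:ℝ) + M - 1)) atTop (nhds 0) :=
      Tendsto.div_atTop tendsto_const_nhds hden
    exact squeeze_zero_norm' hbound hlim
  have : Tendsto (fun M : ℕ => a 0 - a M) atTop (nhds (h x)) := by
    have h0 : Tendsto (fun M : ℕ => a 0 - a M) atTop (nhds (a 0 - 0)) :=
      Tendsto.sub tendsto_const_nhds haM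
    simpa [ha0] using h0
  simpa only [hsum] using this
end

section
/- Fix real parameters e > 0 and t ∈ [0,1], and define g(x) = N/(eNx + (t+1)(1−x)) − (N−1+x)/(e(Nx+1−x) + (t+1)(1−x)) for x ∈ [0,1]. Then for every x ∈ [0,1], Σ_{i=N}^∞ P_{N,i}(x) g(u_{N,i}(x)) = 1/(ex + t + 1); i.e., U g(x) = 1/(ex+t+1) on [0,1]. -/
open MeasureTheory Set Filter Topology

lemma aux_tel (a c D0 D1 : ℝ) (hc : c ≠ 0) (hc1 : c - 1 ≠ 0) (h0 : D0 ≠ 0) (h1 : D1 ≠ 0) :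
    a / (c * (c - 1)) * (c / D0 - (c - 1) / D1) = a / ((c - 1) * D0) - a / (c * D1) := by
  field_simp

theorem stmt12 (N : ℕ) (hN : 2 ≤ N) (e t : ℝ) (he : 0 < e) (ht : t ∈ Set.Icc (0:ℝ) 1)
    (g : ℝ → ℝ)
    (hg : g = fun x => (N : ℝ) / (e * N * x + (t + 1) * (1 - x))
      - ((N : ℝ) - 1 + x) / (e * ((N : ℝ) * x + 1 - x) + (t + 1) * (1 - x))) :
    ∀ x ∈ Set.Icc (0:ℝ) 1,
      HasSum (fun k : ℕ => PNi N (N + k) x * g (uNi N (N + k) x)) (1 / (e * x + t + 1)) := by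
  intro x hx
  obtain ⟨hx0, hx1⟩ := hx
  obtain ⟨ht0, ht1⟩ := ht
  have hN2 : (2:ℝ) ≤ N := by exact_mod_cast hN
  set f : ℕ → ℝ := fun k => (x + N - 1) / ((x + N + (k:ℝ) - 1) * (e * (x + (k:ℝ)) + t + 1))
    with hf
  have hnum : (0:ℝ) ≤ x + N - 1 := by linarith
  have hden1 : ∀ k : ℕ, (0:ℝ) < x + N + (k:ℝ) - 1 := by
    intro k; have hk : (0:ℝ) ≤ k := Nat.cast_nonneg k; linarith
  have hden2 : ∀ k : ℕ, (0:ℝ) < e * (x + (k:ℝ)) + t + 1 := by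
    intro k; have hk : (0:ℝ) ≤ k := Nat.cast_nonneg k; nlinarith
  -- step 1: identify each term with a telescoping difference
  have key : ∀ k : ℕ, PNi N (N + k) x * g (uNi N (N + k) x) = f k - f (k + 1) := by
    intro k
    have hk : (0:ℝ) ≤ k := Nat.cast_nonneg k
    have hNne : (N:ℝ) ≠ 0 := by linarith
    have hc : x + (N:ℝ) + (k:ℝ) ≠ 0 := by linarith
    have hc1 : x + (N:ℝ) + (k:ℝ) - 1 ≠ 0 := by linarith
    have hd0 : e * (x + (k:ℝ)) + t + 1 ≠ 0 := ne_of_gt (hden2 k)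
    have hd1 : e * (x + (k:ℝ) + 1) + t + 1 ≠ 0 := by nlinarith
    have hu : uNi N (N+k) x = (x + k) / (x + N + k) := by
      simp only [uNi]; push_cast; field_simp; ring
    have hA : e * N * (uNi N (N+k) x) + (t + 1) * (1 - uNi N (N+k) x)
        = (N:ℝ) * (e * (x + k) + t + 1) / (x + N + k) := by
      rw [hu]; field_simp; ring
    have hB : e * ((N:ℝ) * uNi N (N+k) x + 1 - uNi N (N+k) x) + (t + 1) * (1 - uNi N (N+k) x)
        = (N:ℝ) * (e * (x + (k:ℝ) + 1) + t + 1) / (x + N + k) := by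
      rw [hu]; field_simp; ring
    have hC : (N:ℝ) - 1 + uNi N (N+k) x = (N:ℝ) * (x + N + (k:ℝ) - 1) / (x + N + k) := by
      rw [hu]; field_simp; ring
    have e1 : (N:ℝ) / ((N:ℝ) * (e * (x + k) + t + 1) / (x + N + k))
        = (x + N + k) / (e * (x + k) + t + 1) := by
      field_simp
    have e2 : (N:ℝ) * (x + N + (k:ℝ) - 1) / (x + N + k)
          / ((N:ℝ) * (e * (x + (k:ℝ) + 1) + t + 1) / (x + N + k))
        = (x + N + (k:ℝ) - 1) / (e * (x + (k:ℝ) + 1) + t + 1) := by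
      field_simp
    have hP : PNi N (N+k) x = (x + N - 1) / ((x + N + (k:ℝ)) * (x + N + (k:ℝ) - 1)) := by
      simp only [PNi]; push_cast; ring_nf
    rw [hg]
    simp only
    rw [hP, hA, hB, hC, e1, e2, aux_tel _ _ _ _ hc hc1 hd0 hd1, hf]
    simp only
    push_cast
    ring
  -- step 2: f tends to 0
  have hf0 : Tendsto f atTop (𝓝 0) := by
    apply Tendsto.div_atTop (tendsto_const_nhds)
    apply Filter.Tendsto.atTop_mul_atTop₀
    · have : Tendsto (fun k : ℕ => (k:ℝ) + (x + N - 1)) atTop atTop :=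
        tendsto_atTop_add_const_right _ _ tendsto_natCast_atTop_atTop
      exact this.congr (fun k => by ring)
    · have : Tendsto (fun k : ℕ => e * (k:ℝ) + (e * x + t + 1)) atTop atTop := by
        apply tendsto_atTop_add_const_right
        exact (tendsto_natCast_atTop_atTop).const_mul_atTop he
      exact this.congr (fun k => by ring)
  -- step 3: terms are nonneg
  have hnn : ∀ k : ℕ, 0 ≤ f k - f (k + 1) := by
    intro k
    have h1 := hden1 k
    have h2 := hden2 k
    have h1' := hden1 (k + 1)
    have h2' := hden2 (k + 1)
    have hk1 : ((k:ℝ) + 1 : ℝ) = ((k + 1 : ℕ) : ℝ) := by push_cast; ring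
    have hle : (x + N + (k:ℝ) - 1) * (e * (x + (k:ℝ)) + t + 1)
        ≤ (x + N + ((k+1:ℕ):ℝ) - 1) * (e * (x + ((k+1:ℕ):ℝ)) + t + 1) := by
      push_cast
      nlinarith
    simp only [hf, sub_nonneg]
    exact div_le_div_of_nonneg_left hnum (by positivity) hle
  -- step 4: assemble
  have hEq : (fun k : ℕ => PNi N (N + k) x * g (uNi N (N + k) x))
      = fun k => f k - f (k + 1) := funext key
  have hf00 : f 0 = 1 / (e * x + t + 1) := by
    simp only [hf, Nat.cast_zero, add_zero]
    rw [div_mul_eq_div_div, div_self (by linarith : x + (N:ℝ) - 1 ≠ 0)]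
  rw [hEq, ← hf00]
  rw [hasSum_iff_tendsto_nat_of_nonneg hnn]
  simp only [Finset.sum_range_sub']
  have : Tendsto (fun n : ℕ => f 0 - f n) atTop (𝓝 (f 0 - 0)) :=
    tendsto_const_nhds.sub hf0
  simpa using this
end

section
/- Fix real parameters e > 0 and t ∈ [0,1]. Then the endpoint values of the ratio φ_{N,t}/Vφ_{N,t} satisfy (φ_{N,t}/Vφ_{N,t})(1) = −2(e+t+1)²/(e²N), and the equality (φ_{N,t}/Vφ_{N,t})(0) = (φ_{N,t}/Vφ_{N,t})(1) holds if and only if H_N(t) = 0, where H_N(t) = 2(t+e+1)⁴ + e³N²(1−2N)(t+1) − e⁴N³. -/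
open MeasureTheory Set Filter Topology

/-- The function φ_{N,t} from the paper (derivative of g_{N,t}). -/
noncomputable def phiNt (N : ℕ) (e t : ℝ) (x : ℝ) : ℝ :=
  -((N : ℝ) * (e * N - t - 1)) / (e * N * x + (t + 1) * (1 - x)) ^ 2
    - ((N : ℝ) * (2 * e - (e * N - t - 1))) / (e * ((N : ℝ) * x + 1 - x) + (t + 1) * (1 - x)) ^ 2

lemma integral_inv_sq_linear (α β a b : ℝ) (h : ∀ y ∈ Set.uIcc a b, α*y+β ≠ 0) :
    ∫ y in a..b, 1/(α*y+β)^2 = (b-a)/((α*a+β)*(α*b+β)) := by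
  rcases eq_or_ne α 0 with rfl | hα
  · simp only [zero_mul, zero_add]
    rw [intervalIntegral.integral_const, smul_eq_mul,
      div_mul_eq_div_div, mul_one_div]
    ring
  · have key : ∀ y ∈ Set.uIcc a b,
        HasDerivAt (fun y => -(α*(α*y+β))⁻¹) (1/(α*y+β)^2) y := by
      intro y hy
      have hyy := h y hy
      have h1 : HasDerivAt (fun y => α*(α*y+β)) (α*α) y := by
        have := ((hasDerivAt_id y).const_mul α).add_const β
        simpa using (this.const_mul α)
      have h2 := (h1.inv (mul_ne_zero hα hyy)).neg
      convert h2 using 1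
      · rfl
      · rfl
      · rfl
      · field_simp
    have hcont : IntervalIntegrable (fun y => 1/(α*y+β)^2) volume a b := by
      apply ContinuousOn.intervalIntegrable
      apply ContinuousOn.div continuousOn_const
      · fun_prop
      · intro y hy; exact pow_ne_zero 2 (h y hy)
    rw [intervalIntegral.integral_eq_sub_of_hasDerivAt key hcont]
    have ha := h a Set.left_mem_uIcc
    have hb := h b Set.right_mem_uIcc
    field_simp
    ring

/-- E_k = e(x+k)+t+1 -/
noncomputable def Ee (e t x : ℝ) (k : ℕ) : ℝ := e*(x+(k:ℝ))+t+1

/-- telescoping term -/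
noncomputable def Tt (N : ℕ) (e t x : ℝ) (k : ℕ) : ℝ :=
  e/(Ee e t x k)^2 - e^2*(k:ℝ)/((x+(N:ℝ)+(k:ℝ)-1)*(Ee e t x k)^2*(Ee e t x (k+1)))

lemma alg1 (E1 E2 E3 c w p e n k : ℝ) (h1 : E1 ≠ 0) (h2 : E2 ≠ 0) (h3 : E3 ≠ 0)
    (hc : c ≠ 0) (hcm : c-1 ≠ 0) (hn : n ≠ 0) :
  (k+1)/c^2 * (-p/(E1*E2) - (2*e-p)/(E2*E3))
  + n*(w)/((c-1)*c^3) * (-c^2/n * (p/E1^2 + (2*e-p)/E2^2))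
  = (-p) * ((k+1)/(c^2*(E1*E2))) + (-(2*e-p)) * ((k+1)/(c^2*(E2*E3)))
  + (-(w*p)) * (1/((c-1)*c*E1^2)) + (-(w*(2*e-p))) * (1/((c-1)*c*E2^2)) := by
  field_simp
  ring

lemma alg2 (A c e k : ℝ) (hA : A ≠ 0) (hAe : A+e ≠ 0) (hA2 : A+2*e ≠ 0)
    (hc : c ≠ 0) (hc1 : c-1 ≠ 0) :
  (-(e*c-A)) * ((k+1)/(c^2*(A*(A+e))))
  + (-(2*e-(e*c-A))) * ((k+1)/(c^2*((A+e)*(A+2*e))))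
  + (-((c-k-1)*(e*c-A))) * (1/((c-1)*c*A^2))
  + (-((c-k-1)*(2*e-(e*c-A)))) * (1/((c-1)*c*(A+e)^2))
  = (e/(A+e)^2 - e^2*(k+1)/(c*(A+e)^2*(A+2*e)))
  - (e/A^2 - e^2*k/((c-1)*A^2*(A+e))) := by
  have hA2' : A + e*2 ≠ 0 := by rwa [mul_comm] at hA2
  field_simp
  ring

set_option maxHeartbeats 1000000 in
lemma V_phi (N : ℕ) (hN : 2 ≤ N) (e t x : ℝ) (he : 0 < e) (ht : 0 ≤ t) (hx : 0 ≤ x) :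
    V N (phiNt N e t) x = e / (e*x+t+1)^2 := by
  have hN2 : (2:ℝ) ≤ (N:ℝ) := by exact_mod_cast hN
  set p : ℝ := e*N - t - 1 with hp
  set q : ℝ := t + 1 with hq
  have hq0 : 0 < q := by positivity
  have hpq : p + q = e*N := by rw [hp, hq]; ring
  have hE : ∀ k : ℕ, 0 < Ee e t x k := by
    intro k; unfold Ee; positivity
  have hc : ∀ k : ℕ, (0:ℝ) < x + N + k := by
    intro k; have : (0:ℝ) ≤ (k:ℝ) := Nat.cast_nonneg k; linarith
  have hc1 : ∀ k : ℕ, (0:ℝ) < x + N + k - 1 := by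
    intro k; have : (0:ℝ) ≤ (k:ℝ) := Nat.cast_nonneg k; linarith
  -- u values
  have hu : ∀ k : ℕ, uNi N (N+k) x = 1 - (N:ℝ)/(x + N + k) := by
    intro k; unfold uNi; push_cast; ring_nf
  have hu' : ∀ k : ℕ, uNi N (N+k+1) x = 1 - (N:ℝ)/(x + N + k + 1) := by
    intro k
    have : N + k + 1 = N + (k+1) := by ring
    rw [this, hu (k+1)]; push_cast; ring_nf
  -- membership in [0,1]
  have humem : ∀ k : ℕ, ∀ y ∈ Set.uIcc (uNi N (N+k) x) (uNi N (N+k+1) x),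
      0 ≤ y ∧ y ≤ 1 := by
    intro k y hy
    have h1 : uNi N (N+k) x ≤ uNi N (N+k+1) x := by
      rw [hu k, hu' k]
      have := hc k
      have h2 : (0:ℝ) < x + N + k + 1 := by linarith
      have : (N:ℝ)/(x+N+k+1) ≤ (N:ℝ)/(x+N+k) := by
        apply div_le_div_of_nonneg_left (by positivity) (hc k) (by linarith)
      linarith
    rw [Set.uIcc_of_le h1] at hy
    obtain ⟨hy1, hy2⟩ := hy
    constructor
    · have h0 : 0 ≤ uNi N (N+k) x := by
        rw [hu k]
        have hNk : (N:ℝ) ≤ x + N + k := by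
          have : (0:ℝ) ≤ (k:ℝ) := Nat.cast_nonneg k; linarith
        have := div_le_one_of_le₀ hNk (le_of_lt (hc k))
        linarith
      linarith
    · have h1' : uNi N (N+k+1) x ≤ 1 := by
        rw [hu' k]
        have : (0:ℝ) < (N:ℝ)/(x+N+k+1) := by
          apply div_pos (by positivity) (by have := hc k; linarith)
        linarith
      linarith
  -- positivity of linear denominators on [0,1]
  have hlin : ∀ c d y : ℝ, 0 < d → 0 < c + d → 0 ≤ y → y ≤ 1 → 0 < c*y+d := by
    intro c d y hd hcd hy0 hy1
    nlinarith [mul_nonneg hy0 (le_of_lt hcd), mul_nonneg (sub_nonneg.2 hy1) (le_of_lt hd)]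
  -- phi rewritten
  have hphi : ∀ y : ℝ, phiNt N e t y
      = (-((N:ℝ)*p)) * (1/(p*y+q)^2) + (-((N:ℝ)*(2*e-p))) * (1/((p-e)*y+(q+e))^2) := by
    intro y
    unfold phiNt
    rw [hp, hq]
    have h1 : e * (N:ℝ) * y + (t + 1) * (1 - y) = (e*N-t-1)*y+(t+1) := by ring
    have h2 : e * ((N:ℝ) * y + 1 - y) + (t + 1) * (1 - y) = ((e*N-t-1)-e)*y+((t+1)+e) := by ring
    rw [h1, h2]
    ring
  -- value of phi at u_i
  have hphiu : ∀ k : ℕ, phiNt N e t (uNi N (N+k) x)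
      = -(x+N+k)^2/N * (p/(Ee e t x k)^2 + (2*e-p)/(Ee e t x (k+1))^2) := by
    intro k
    rw [hphi, hu k]
    have h1 : p*(1 - (N:ℝ)/(x+N+k))+q = (N:ℝ)*(Ee e t x k)/(x+N+k) := by
      unfold Ee
      rw [hp, hq]
      field_simp
      ring
    have h2 : (p-e)*(1 - (N:ℝ)/(x+N+k))+(q+e) = (N:ℝ)*(Ee e t x (k+1))/(x+N+k) := by
      unfold Ee
      rw [hp, hq]
      push_cast
      field_simp
      ring
    rw [h1, h2]
    have hN0 : (N:ℝ) ≠ 0 := by positivity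
    have := hE k; have := hE (k+1); have := hc k
    field_simp
    ring
  -- the integral
  have hint : ∀ k : ℕ, (∫ u in (uNi N (N+k) x)..(uNi N (N+k+1) x), phiNt N e t u)
      = -p/(Ee e t x k * Ee e t x (k+1)) - (2*e-p)/(Ee e t x (k+1) * Ee e t x (k+2)) := by
    intro k
    have hne1 : ∀ y ∈ Set.uIcc (uNi N (N+k) x) (uNi N (N+k+1) x), p*y+q ≠ 0 := by
      intro y hy
      obtain ⟨hy0, hy1⟩ := humem k y hy
      exact ne_of_gt (hlin p q y hq0 (by rw [hpq]; positivity) hy0 hy1)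
    have hne2 : ∀ y ∈ Set.uIcc (uNi N (N+k) x) (uNi N (N+k+1) x), (p-e)*y+(q+e) ≠ 0 := by
      intro y hy
      obtain ⟨hy0, hy1⟩ := humem k y hy
      have : (p-e)+(q+e) = e*N := by rw [hp, hq]; ring
      exact ne_of_gt (hlin (p-e) (q+e) y (by positivity) (by rw [this]; positivity) hy0 hy1)
    have hi1 : IntervalIntegrable (fun y => 1/(p*y+q)^2) volume
        (uNi N (N+k) x) (uNi N (N+k+1) x) := by
      apply ContinuousOn.intervalIntegrable
      apply ContinuousOn.div continuousOn_const
      · fun_prop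
      · intro y hy; exact pow_ne_zero 2 (hne1 y hy)
    have hi2 : IntervalIntegrable (fun y => 1/((p-e)*y+(q+e))^2) volume
        (uNi N (N+k) x) (uNi N (N+k+1) x) := by
      apply ContinuousOn.intervalIntegrable
      apply ContinuousOn.div continuousOn_const
      · fun_prop
      · intro y hy; exact pow_ne_zero 2 (hne2 y hy)
    have : (∫ u in (uNi N (N+k) x)..(uNi N (N+k+1) x), phiNt N e t u)
        = ((-((N:ℝ)*p)) * ∫ u in (uNi N (N+k) x)..(uNi N (N+k+1) x), 1/(p*u+q)^2)
          + ((-((N:ℝ)*(2*e-p))) * ∫ u in (uNi N (N+k) x)..(uNi N (N+k+1) x), 1/((p-e)*u+(q+e))^2) := by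
      rw [← intervalIntegral.integral_const_mul, ← intervalIntegral.integral_const_mul,
        ← intervalIntegral.integral_add (hi1.const_mul _) (hi2.const_mul _)]
      apply intervalIntegral.integral_congr
      intro y _
      exact hphi y
    rw [this, integral_inv_sq_linear _ _ _ _ hne1, integral_inv_sq_linear _ _ _ _ hne2,
      hu k, hu' k]
    have h1 : p*(1 - (N:ℝ)/(x+N+k))+q = (N:ℝ)*(Ee e t x k)/(x+N+k) := by
      unfold Ee; rw [hp, hq]; field_simp; ring
    have h1' : p*(1 - (N:ℝ)/(x+N+k+1))+q = (N:ℝ)*(Ee e t x (k+1))/(x+N+k+1) := by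
      unfold Ee; rw [hp, hq]; push_cast
      have := hc k
      field_simp
      ring
    have h2 : (p-e)*(1 - (N:ℝ)/(x+N+k))+(q+e) = (N:ℝ)*(Ee e t x (k+1))/(x+N+k) := by
      unfold Ee; rw [hp, hq]; push_cast; field_simp; ring
    have h2' : (p-e)*(1 - (N:ℝ)/(x+N+k+1))+(q+e) = (N:ℝ)*(Ee e t x (k+2))/(x+N+k+1) := by
      unfold Ee; rw [hp, hq]; push_cast
      have := hc k
      field_simp
      ring
    rw [h1, h1', h2, h2']
    have hN0 : (N:ℝ) ≠ 0 := by positivity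
    have e1 := hE k; have e2 := hE (k+1); have e3 := hE (k+2)
    have c1 := hc k
    have c2 : (0:ℝ) < x + N + k + 1 := by linarith
    field_simp
    ring
  -- the summand
  simp only [V]
  set f : ℕ → ℝ := fun k =>
    ((((N + k : ℕ) : ℝ) + 1 - N) / (x + ((N + k : ℕ) : ℝ)) ^ 2
        * (∫ u in (uNi N (N + k) x)..(uNi N (N + k + 1) x), phiNt N e t u)
      + ((N : ℝ) * (x + N - 1)) / ((x + ((N + k : ℕ) : ℝ) - 1) * (x + ((N + k : ℕ) : ℝ)) ^ 3)
        * phiNt N e t (uNi N (N + k) x)) with hfdef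
  have hN0 : (N:ℝ) ≠ 0 := by positivity
  -- closed form
  have hfclosed : ∀ k : ℕ, f k =
      (-p) * (((k:ℝ)+1)/((x+(N:ℝ)+(k:ℝ))^2*(Ee e t x k * Ee e t x (k+1))))
      + (-(2*e-p)) * (((k:ℝ)+1)/((x+(N:ℝ)+(k:ℝ))^2*(Ee e t x (k+1) * Ee e t x (k+2))))
      + (-((x+(N:ℝ)-1)*p)) * (1/((x+(N:ℝ)+(k:ℝ)-1)*(x+(N:ℝ)+(k:ℝ))*(Ee e t x k)^2))
      + (-((x+(N:ℝ)-1)*(2*e-p))) * (1/((x+(N:ℝ)+(k:ℝ)-1)*(x+(N:ℝ)+(k:ℝ))*(Ee e t x (k+1))^2)) := by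
    intro k
    rw [hfdef]
    simp only
    rw [hint k, hphiu k]
    push_cast
    rw [show x+((N:ℝ)+(k:ℝ)) = x+(N:ℝ)+(k:ℝ) from by ring,
      show (N:ℝ)+(k:ℝ)+1-(N:ℝ) = (k:ℝ)+1 from by ring]
    exact alg1 _ _ _ _ _ _ _ _ _ (hE k).ne' (hE (k+1)).ne' (hE (k+2)).ne'
      (hc k).ne' (hc1 k).ne' hN0
  -- telescoping identity
  have hfk : ∀ k : ℕ, f k = Tt N e t x (k+1) - Tt N e t x k := by
    intro k
    rw [hfclosed k]
    have h21 : Ee e t x (k+1) = Ee e t x k + e := by unfold Ee; push_cast; ring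
    have h22 : Ee e t x (k+2) = Ee e t x k + 2*e := by unfold Ee; push_cast; ring
    have h22' : Ee e t x (k+1+1) = Ee e t x k + 2*e := by unfold Ee; push_cast; ring
    have hpc : p = e*(x+(N:ℝ)+(k:ℝ)) - Ee e t x k := by
      unfold Ee; rw [hp]; push_cast; ring
    have hAe : Ee e t x k + e ≠ 0 := by rw [← h21]; exact (hE (k+1)).ne'
    have hA2 : Ee e t x k + 2*e ≠ 0 := by rw [← h22]; exact (hE (k+2)).ne'
    unfold Tt
    push_cast
    rw [h21, h22, hpc,
      show x+(N:ℝ)-1 = (x+(N:ℝ)+(k:ℝ))-(k:ℝ)-1 from by ring,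
      show x+(N:ℝ)+((k:ℝ)+1)-1 = x+(N:ℝ)+(k:ℝ) from by ring]
    exact alg2 (Ee e t x k) (x+(N:ℝ)+(k:ℝ)) e (k:ℝ) (hE k).ne' hAe hA2
      (hc k).ne' (by have := hc1 k; intro h; rw [h] at this; exact lt_irrefl 0 this)
  -- bounds for summability
  have hbase : Summable (fun k : ℕ => 1/((k:ℝ)+1)^2) := by
    have h := Real.summable_one_div_nat_pow.mpr (show 1 < 2 by norm_num)
    have := (summable_nat_add_iff 1).mpr h
    convert this using 2 with k
    · rfl
    push_cast; ring
  have hd1 : ∀ k : ℕ, (k:ℝ)+1 ≤ x+(N:ℝ)+k := by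
    intro k; linarith
  have hd2 : ∀ k : ℕ, (k:ℝ)+1 ≤ x+(N:ℝ)+k-1 := by
    intro k; linarith
  have hE1 : ∀ k : ℕ, 1 ≤ Ee e t x k := by
    intro k; unfold Ee
    have : 0 ≤ e*(x+(k:ℝ)) := by positivity
    linarith
  have hEe : ∀ k : ℕ, e*((k:ℝ)) ≤ Ee e t x k := by
    intro k; unfold Ee
    have : 0 ≤ e*x := by positivity
    nlinarith
  have hg1 : Summable (fun k : ℕ => ((k:ℝ)+1)/((x+(N:ℝ)+k)^2*(Ee e t x k * Ee e t x (k+1)))) := by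
    apply Summable.of_nonneg_of_le
      (fun k => le_of_lt (div_pos (by positivity)
        (mul_pos (pow_pos (hc k) 2) (mul_pos (hE k) (hE (k+1)))))) _ (hbase.mul_left (1/e))
    intro k
    have hEk1 : e*((k:ℝ)+1) ≤ Ee e t x (k+1) := by
      have := hEe (k+1); push_cast at this; linarith
    have key : e*((k:ℝ)+1)^3 ≤ (x+(N:ℝ)+k)^2*(Ee e t x k * Ee e t x (k+1)) := by
      calc e*((k:ℝ)+1)^3 = ((k:ℝ)+1)^2 * (1 * (e*((k:ℝ)+1))) := by ring
        _ ≤ (x+(N:ℝ)+k)^2 * (Ee e t x k * Ee e t x (k+1)) := by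
            apply mul_le_mul
            · apply pow_le_pow_left₀ (by positivity) (hd1 k)
            · exact mul_le_mul (hE1 k) hEk1 (le_of_lt (mul_pos he (by positivity))) (le_trans zero_le_one (hE1 k))
            · positivity
            · positivity
    calc ((k:ℝ)+1)/((x+(N:ℝ)+k)^2*(Ee e t x k * Ee e t x (k+1)))
        ≤ ((k:ℝ)+1)/(e*((k:ℝ)+1)^3) :=
          div_le_div_of_nonneg_left (by positivity) (mul_pos he (by positivity)) key
      _ = 1/e * (1/((k:ℝ)+1)^2) := by
          field_simp
  have hg2 : Summable (fun k : ℕ => ((k:ℝ)+1)/((x+(N:ℝ)+k)^2*(Ee e t x (k+1) * Ee e t x (k+2)))) := by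
    apply Summable.of_nonneg_of_le
      (fun k => le_of_lt (div_pos (by positivity)
        (mul_pos (pow_pos (hc k) 2) (mul_pos (hE (k+1)) (hE (k+2)))))) _ (hbase.mul_left (1/e))
    intro k
    have hEk1 : e*((k:ℝ)+1) ≤ Ee e t x (k+1) := by
      have := hEe (k+1); push_cast at this; linarith
    have key : e*((k:ℝ)+1)^3 ≤ (x+(N:ℝ)+k)^2*(Ee e t x (k+1) * Ee e t x (k+2)) := by
      calc e*((k:ℝ)+1)^3 = ((k:ℝ)+1)^2 * ((e*((k:ℝ)+1)) * 1) := by ring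
        _ ≤ (x+(N:ℝ)+k)^2 * (Ee e t x (k+1) * Ee e t x (k+2)) := by
            apply mul_le_mul
            · apply pow_le_pow_left₀ (by positivity) (hd1 k)
            · exact mul_le_mul hEk1 (hE1 (k+2)) zero_le_one (le_of_lt (hE (k+1)))
            · positivity
            · positivity
    calc ((k:ℝ)+1)/((x+(N:ℝ)+k)^2*(Ee e t x (k+1) * Ee e t x (k+2)))
        ≤ ((k:ℝ)+1)/(e*((k:ℝ)+1)^3) :=
          div_le_div_of_nonneg_left (by positivity) (mul_pos he (by positivity)) key
      _ = 1/e * (1/((k:ℝ)+1)^2) := by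
          field_simp
  have hg3 : ∀ j : ℕ, Summable (fun k : ℕ => 1/((x+(N:ℝ)+k-1)*(x+(N:ℝ)+k)*(Ee e t x (k+j))^2)) := by
    intro j
    apply Summable.of_nonneg_of_le
      (fun k => le_of_lt (div_pos one_pos
        (mul_pos (mul_pos (hc1 k) (hc k)) (pow_pos (hE (k+j)) 2)))) _ (hbase.mul_left 1)
    intro k
    have key : ((k:ℝ)+1)^2 ≤ (x+(N:ℝ)+k-1)*(x+(N:ℝ)+k)*(Ee e t x (k+j))^2 := by
      calc ((k:ℝ)+1)^2 = ((k:ℝ)+1)*((k:ℝ)+1)*1^2 := by ring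
        _ ≤ (x+(N:ℝ)+k-1)*(x+(N:ℝ)+k)*(Ee e t x (k+j))^2 := by
            apply mul_le_mul
            · exact mul_le_mul (hd2 k) (hd1 k) (by positivity) (by linarith [hd2 k, Nat.cast_nonneg (α := ℝ) k])
            · apply pow_le_pow_left₀ zero_le_one (hE1 (k+j))
            · positivity
            · exact le_of_lt (mul_pos (hc1 k) (hc k))
    calc 1/((x+(N:ℝ)+k-1)*(x+(N:ℝ)+k)*(Ee e t x (k+j))^2)
        ≤ 1/(((k:ℝ)+1)^2) :=
          div_le_div_of_nonneg_left zero_le_one (by positivity) key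
      _ = 1 * (1/((k:ℝ)+1)^2) := by ring
  have hsummable : Summable f := by
    rw [show f = fun (k : ℕ) => (-p) * (((k:ℝ)+1)/((x+(N:ℝ)+k)^2*(Ee e t x k * Ee e t x (k+1))))
      + (-(2*e-p)) * (((k:ℝ)+1)/((x+(N:ℝ)+k)^2*(Ee e t x (k+1) * Ee e t x (k+2))))
      + (-((x+(N:ℝ)-1)*p)) * (1/((x+(N:ℝ)+k-1)*(x+(N:ℝ)+k)*(Ee e t x k)^2))
      + (-((x+(N:ℝ)-1)*(2*e-p))) * (1/((x+(N:ℝ)+k-1)*(x+(N:ℝ)+k)*(Ee e t x (k+1))^2))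
      from funext hfclosed]
    have h3 := hg3 0
    have h4 := hg3 1
    simp only [Nat.add_zero] at h3
    exact (((hg1.mul_left _).add (hg2.mul_left _)).add (h3.mul_left _)).add (h4.mul_left _)
  -- limit of T
  have hT0 : Tendsto (fun k => Tt N e t x k) atTop (𝓝 0) := by
    apply squeeze_zero_norm' (a := fun k : ℕ => 2/(k:ℝ))
    · filter_upwards [eventually_ge_atTop 1] with k hk
      have hk0 : (0:ℝ) < (k:ℝ) := by exact_mod_cast hk
      have hek : e*(k:ℝ) ≤ Ee e t x k := hEe k
      have h1E : 1 ≤ Ee e t x k := hE1 k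
      have h1E' : 1 ≤ Ee e t x (k+1) := hE1 (k+1)
      have hEk := hE k
      have hc1k := hc1 k
      have habs : |Tt N e t x k| ≤ e/(Ee e t x k)^2
          + e^2*(k:ℝ)/((x+(N:ℝ)+k-1)*(Ee e t x k)^2*(Ee e t x (k+1))) := by
        unfold Tt
        refine le_trans (abs_sub _ _) ?_
        rw [abs_of_nonneg (by positivity), abs_of_nonneg (by positivity)]
      have hb1 : e/(Ee e t x k)^2 ≤ 1/(k:ℝ) := by
        rw [div_le_div_iff₀ (pow_pos hEk 2) hk0]
        nlinarith [mul_le_mul hek h1E zero_le_one (le_of_lt hEk)]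
      have hb2 : e^2*(k:ℝ)/((x+(N:ℝ)+k-1)*(Ee e t x k)^2*(Ee e t x (k+1))) ≤ 1/(k:ℝ) := by
        have hdpos : 0 < (x+(N:ℝ)+k-1)*(Ee e t x k)^2*(Ee e t x (k+1)) :=
          mul_pos (mul_pos (hc1 k) (pow_pos hEk 2)) (hE (k+1))
        rw [div_le_div_iff₀ hdpos hk0]
        have hNk1 : 1 ≤ x+(N:ℝ)+k-1 := by linarith
        have hq1 : e*(k:ℝ)*(e*(k:ℝ)) ≤ Ee e t x k * Ee e t x k :=
          mul_le_mul hek hek (mul_nonneg he.le (Nat.cast_nonneg k)) hEk.le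
        have hq2 : Ee e t x k * Ee e t x k ≤ (x+(N:ℝ)+k-1)*(Ee e t x k * Ee e t x k) :=
          le_mul_of_one_le_left (mul_pos hEk hEk).le hNk1
        have hq3 : (x+(N:ℝ)+k-1)*(Ee e t x k * Ee e t x k)
            ≤ ((x+(N:ℝ)+k-1)*(Ee e t x k * Ee e t x k))*(Ee e t x (k+1)) :=
          le_mul_of_one_le_right (mul_pos (hc1 k) (mul_pos hEk hEk)).le h1E'
        nlinarith [hq1, hq2, hq3]
      have : ‖Tt N e t x k‖ = |Tt N e t x k| := rfl
      rw [this]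
      calc |Tt N e t x k| ≤ 1/(k:ℝ) + 1/(k:ℝ) := le_trans habs (by linarith)
        _ = 2/(k:ℝ) := by ring
    · exact tendsto_const_div_atTop_nhds_zero_nat 2
  -- partial sums
  have hps : Tendsto (fun n => ∑ i ∈ Finset.range n, f i) atTop (𝓝 (-(Tt N e t x 0))) := by
    have heq : (fun n => ∑ i ∈ Finset.range n, f i)
        = fun n => Tt N e t x n - Tt N e t x 0 := by
      funext n
      rw [show ∑ i ∈ Finset.range n, f i
          = ∑ i ∈ Finset.range n, (Tt N e t x (i+1) - Tt N e t x i) from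
        Finset.sum_congr rfl (fun i _ => hfk i)]
      exact Finset.sum_range_sub (Tt N e t x) n
    rw [heq]
    have := hT0.sub (tendsto_const_nhds (x := Tt N e t x 0))
    simpa using this
  have hhs : HasSum f (-(Tt N e t x 0)) :=
    (hsummable.hasSum_iff_tendsto_nat).mpr hps
  rw [hhs.tsum_eq]
  unfold Tt Ee
  norm_num

theorem stmt15 (N : ℕ) (hN : 2 ≤ N) (e t : ℝ) (he : 0 < e) (ht : t ∈ Set.Icc (0:ℝ) 1) :
    phiNt N e t 1 / V N (phiNt N e t) 1 = -2 * (e + t + 1) ^ 2 / (e ^ 2 * N) ∧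
    (phiNt N e t 0 / V N (phiNt N e t) 0 = phiNt N e t 1 / V N (phiNt N e t) 1 ↔
      2 * (t + e + 1) ^ 4 + e ^ 3 * (N : ℝ) ^ 2 * (1 - 2 * N) * (t + 1)
        - e ^ 4 * (N : ℝ) ^ 3 = 0) := by
  obtain ⟨ht0, ht1⟩ := ht
  have hN2 : (2:ℝ) ≤ (N:ℝ) := by exact_mod_cast hN
  have hNpos : (0:ℝ) < (N:ℝ) := by linarith
  have hA : (0:ℝ) < e+t+1 := by linarith
  have hs : (0:ℝ) < t+1 := by linarith
  have hV1 : V N (phiNt N e t) 1 = e/(e+t+1)^2 := by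
    rw [V_phi N hN e t 1 he ht0 (by norm_num)]; ring_nf
  have hV0 : V N (phiNt N e t) 0 = e/(t+1)^2 := by
    rw [V_phi N hN e t 0 he ht0 le_rfl]; ring_nf
  have hphi1 : phiNt N e t 1 = -2/(e*N) := by
    unfold phiNt
    rw [show e*(N:ℝ)*1+(t+1)*(1-1) = e*N from by ring,
        show e*((N:ℝ)*1+1-1)+(t+1)*(1-1) = e*N from by ring]
    have hEN : e*(N:ℝ) ≠ 0 := by positivity
    field_simp
    ring
  have hphi0 : phiNt N e t 0
      = -((N:ℝ)*(e*N-t-1))/(t+1)^2 - ((N:ℝ)*(2*e-(e*N-t-1)))/(e+t+1)^2 := by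
    unfold phiNt
    rw [show e*(N:ℝ)*0+(t+1)*(1-0) = t+1 from by ring,
        show e*((N:ℝ)*0+1-0)+(t+1)*(1-0) = e+t+1 from by ring]
  have part1 : phiNt N e t 1 / V N (phiNt N e t) 1 = -2 * (e + t + 1) ^ 2 / (e ^ 2 * N) := by
    rw [hphi1, hV1]
    field_simp
  refine ⟨part1, ?_⟩
  rw [part1, hphi0, hV0]
  have key : (-((N:ℝ)*(e*N-t-1))/(t+1)^2 - ((N:ℝ)*(2*e-(e*N-t-1)))/(e+t+1)^2) / (e/(t+1)^2)
      - (-2 * (e + t + 1) ^ 2 / (e ^ 2 * N))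
      = (2 * (t + e + 1) ^ 4 + e ^ 3 * (N : ℝ) ^ 2 * (1 - 2 * N) * (t + 1)
        - e ^ 4 * (N : ℝ) ^ 3) / (e^2*(N:ℝ)*(e+t+1)^2) := by
    field_simp
    ring
  rw [← sub_eq_zero, key, div_eq_zero_iff]
  have hden : e^2*(N:ℝ)*(e+t+1)^2 ≠ 0 := by positivity
  simp [hden]
end
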